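/- arXiv:2509.14599 — 4 statements merged into one kernel-verified Lean document; each statement's English description precedes it below -/
import Mathlib

section
/- Let K ⊆ ℝ be a real quadratic number field and (A_n)_{n≥0} a sequence of irrational elements of K with continued fraction expansions A_n = [a_0(A_n); a_1(A_n), a_2(A_n), …]. Suppose that for every i ≥ 1 one has lim_{n→∞} (log a_i(A_n))/n = 0, and suppose that the limit lim_{n→∞} (log|A_n − A_n′|)/n exists and is strictly positive. Then the sequence (ℓ(A_n))_{n≥0} of period lengths is unbounded. -/
open Polynomial Filter

/-- The Gauss map used to generate the continued fraction expansion of a real number. -/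
noncomputable def cfMap (x : ℝ) : ℝ := if Int.fract x = 0 then 0 else (Int.fract x)⁻¹

/-- The `i`-th partial quotient `a_i(x)` of the continued fraction expansion of `x`. -/
noncomputable def cfa (x : ℝ) (i : ℕ) : ℤ := ⌊cfMap^[i] x⌋

/-- The minimal eventual period length `ℓ(x)` of the continued fraction expansion of `x`,
with the convention `ℓ(x) = 0` for rational `x`. -/
noncomputable def periodLength (x : ℝ) : ℕ :=
  open scoped Classical in
  if Irrational x then sInf {p : ℕ | 0 < p ∧ ∃ N : ℕ, ∀ n ≥ N, cfa x (n + p) = cfa x n} else 0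

namespace Stmt2Aux

structure CFSys (t u : ℕ → ℝ) : Prop where
  t_irr : ∀ i, Irrational (t i)
  u_irr : ∀ i, Irrational (u i)
  t_rec : ∀ i, t (i+1) = (t i - ⌊t i⌋)⁻¹
  u_rec : ∀ i, u (i+1) = (u i - ⌊t i⌋)⁻¹

variable {t u : ℕ → ℝ}

lemma CFSys.t_ne (S : CFSys t u) (i : ℕ) : t i - ⌊t i⌋ ≠ 0 := by
  intro h
  exact (S.t_irr i).ne_int ⌊t i⌋ (by linarith)

lemma CFSys.u_ne (S : CFSys t u) (i : ℕ) : u i - ⌊t i⌋ ≠ 0 := by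
  intro h
  exact (S.u_irr i).ne_int ⌊t i⌋ (by linarith)

lemma CFSys.t_eq (S : CFSys t u) (i : ℕ) : t i = ⌊t i⌋ + (t (i+1))⁻¹ := by
  rw [S.t_rec, inv_inv]; ring

lemma CFSys.u_eq (S : CFSys t u) (i : ℕ) : u i = ⌊t i⌋ + (u (i+1))⁻¹ := by
  rw [S.u_rec, inv_inv]; ring

lemma CFSys.t_gt_one (S : CFSys t u) {i : ℕ} (hi : 1 ≤ i) : 1 < t i := by
  obtain ⟨j, rfl⟩ : ∃ j, i = j + 1 := ⟨i - 1, by omega⟩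
  rw [S.t_rec]
  have h1 : Int.fract (t j) < 1 := Int.fract_lt_one _
  have h0 : 0 < Int.fract (t j) := by
    rcases (Int.fract_nonneg (t j)).lt_or_eq with h | h
    · exact h
    · exact absurd h.symm (by rw [← Int.self_sub_floor]; exact S.t_ne j)
  rw [← Int.self_sub_floor] at h0 h1
  exact one_lt_inv_iff₀.mpr ⟨h0, h1⟩

lemma CFSys.t_pos (S : CFSys t u) {i : ℕ} (hi : 1 ≤ i) : 0 < t i :=
  lt_trans one_pos (S.t_gt_one hi)

lemma CFSys.floor_pos (S : CFSys t u) {i : ℕ} (hi : 1 ≤ i) : 1 ≤ ⌊t i⌋ := by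
  have := S.t_gt_one hi
  exact Int.le_floor.mpr (by exact_mod_cast this.le)

lemma CFSys.u_ne_zero (S : CFSys t u) (i : ℕ) : u i ≠ 0 := by
  intro h
  exact (S.u_irr i).ne_int 0 (by rw [h]; norm_num)

lemma CFSys.t_ne_zero (S : CFSys t u) (i : ℕ) : t i ≠ 0 := by
  intro h
  exact (S.t_irr i).ne_int 0 (by rw [h]; norm_num)

lemma abs_sub_lt_one_of_floor_eq {x y : ℝ} (h : ⌊x⌋ = ⌊y⌋) : |x - y| < 1 := by
  have h1 := Int.fract_nonneg x
  have h2 := Int.fract_lt_one x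
  have h3 := Int.fract_nonneg y
  have h4 := Int.fract_lt_one y
  have e : x - y = Int.fract x - Int.fract y := by
    rw [← Int.self_sub_floor, ← Int.self_sub_floor, h]; ring
  rw [e, abs_lt]; constructor <;> linarith

/-- two tails with identical partial quotient sequences are equal -/
lemma CFSys.unique (S : CFSys t u) {m m' : ℕ}
    (h : ∀ j, ⌊t (m + j)⌋ = ⌊t (m' + j)⌋) : t m = t m' := by
  -- one-step identity
  have onestep : ∀ m m' : ℕ, ⌊t m⌋ = ⌊t m'⌋ →
      |t m - t m'| = |t (m+1) - t (m'+1)| / (t (m+1) * t (m'+1)) := by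
    intro m m' h0
    have hp : 0 < t (m+1) := S.t_pos (by omega)
    have hp' : 0 < t (m'+1) := S.t_pos (by omega)
    have e : t m - t m' = (t (m'+1) - t (m+1)) / (t (m+1) * t (m'+1)) := by
      rw [S.t_eq m, S.t_eq m', h0]
      field_simp
      ring
    rw [e, abs_div, abs_of_pos (mul_pos hp hp'), abs_sub_comm]
  have prodge : ∀ m : ℕ, 2 ≤ t (m+1) * t (m+2) := by
    intro m
    have h1 : 1 < t (m+2) := S.t_gt_one (by omega)
    have h2 : (1:ℝ) ≤ ⌊t (m+1)⌋ := by exact_mod_cast S.floor_pos (i := m+1) (by omega)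
    have h3 := S.t_eq (m+1)
    have h4 : (0:ℝ) < t (m+2) := by linarith
    have h5 : t (m+1) ≥ 1 + (t (m+2))⁻¹ := by rw [h3]; gcongr
    have h6 : (t (m+2))⁻¹ * t (m+2) = 1 := inv_mul_cancel₀ (by positivity)
    nlinarith
  have key : ∀ k : ℕ, ∀ m m' : ℕ, (∀ j, ⌊t (m + j)⌋ = ⌊t (m' + j)⌋) →
      |t m - t m'| ≤ (1/4 : ℝ)^k := by
    intro k
    induction k with
    | zero =>
      intro m m' h
      have h0 : ⌊t m⌋ = ⌊t m'⌋ := by simpa using h 0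
      simpa using (abs_sub_lt_one_of_floor_eq h0).le
    | succ k ih =>
      intro m m' h
      have h0 : ⌊t m⌋ = ⌊t m'⌋ := by simpa using h 0
      have h1 : ⌊t (m+1)⌋ = ⌊t (m'+1)⌋ := by simpa using h 1
      have e1 := onestep m m' h0
      have e2 := onestep (m+1) (m'+1) h1
      have ihx : |t (m+2) - t (m'+2)| ≤ (1/4:ℝ)^k := by
        have := ih (m+2) (m'+2) (fun j => by
          have := h (2 + j)
          simpa [Nat.add_assoc, Nat.add_comm, Nat.add_left_comm] using this)
        simpa using this
      have q1 := prodge m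
      have q2 := prodge m'
      have hp1 : 0 < t (m+1) := S.t_pos (by omega)
      have hp2 : 0 < t (m+2) := S.t_pos (by omega)
      have hp1' : 0 < t (m'+1) := S.t_pos (by omega)
      have hp2' : 0 < t (m'+2) := S.t_pos (by omega)
      rw [e1, e2, div_div]
      have hD : (4:ℝ) ≤ t (m+2) * t (m'+2) * (t (m+1) * t (m'+1)) := by nlinarith
      calc |t (m+2) - t (m'+2)| / (t (m+2) * t (m'+2) * (t (m+1) * t (m'+1)))
          ≤ (1/4:ℝ)^k / 4 := by
            apply div_le_div₀ (by positivity) ihx (by norm_num) hD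
        _ = (1/4:ℝ)^(k+1) := by ring
  have h0 : |t m - t m'| ≤ 0 := by
    refine ge_of_tendsto (tendsto_pow_atTop_nhds_zero_of_lt_one (by norm_num) (by norm_num)
      : Tendsto (fun k : ℕ => (1/4:ℝ)^k) atTop (nhds 0)) ?_
    exact Eventually.of_forall (fun k => key k m m' h)
  have := abs_nonpos_iff.mp h0
  linarith [sub_eq_zero.mp this]


/-- reducedness of the conjugate tails -/
lemma CFSys.u_red (S : CFSys t u) (hd3 : 3 ≤ |t 0 - u 0|) :
    ∀ i, 3 ≤ i → -1 < u i ∧ u i < 0 := by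
  -- step lemma
  have step : ∀ i, 1 ≤ i → u i < 0 → -1 < u (i+1) ∧ u (i+1) < 0 := by
    intro i hi hu
    have hf : (1:ℝ) ≤ ⌊t i⌋ := by exact_mod_cast S.floor_pos hi
    have h1 : u i - ⌊t i⌋ < -1 := by linarith
    have h0 : u i - ⌊t i⌋ < 0 := by linarith
    rw [S.u_rec]
    constructor
    · have hne : (u i - ⌊t i⌋) ≠ 0 := ne_of_lt h0
      have hmul : (u i - ⌊t i⌋) * (u i - ⌊t i⌋)⁻¹ = 1 := mul_inv_cancel₀ hne
      nlinarith
    · exact inv_neg''.mpr h0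
  -- find k ≤ 2 with 1 ≤ k and u k < 0
  have hk : ∃ k, 1 ≤ k ∧ k ≤ 2 ∧ u k < 0 := by
    have hne : t 0 ≠ u 0 := by
      intro h; rw [h] at hd3; simp at hd3; linarith
    rcases lt_or_gt_of_ne hne with hlt | hgt
    · -- t 0 < u 0 : u 0 ≥ t 0 + 3
      have h3 : t 0 + 3 ≤ u 0 := by
        rw [abs_sub_comm, abs_of_pos (by linarith)] at hd3; linarith
      have hf0 : (⌊t 0⌋ : ℝ) ≤ t 0 := Int.floor_le _
      have h4 : 3 ≤ u 0 - ⌊t 0⌋ := by linarith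
      have hu1pos : 0 < u 1 := by
        rw [S.u_rec]
        have : (0:ℝ) < u 0 - ⌊t 0⌋ := by linarith
        positivity
      have hu1lt : u 1 ≤ 1/3 := by
        rw [S.u_rec, show (1:ℝ)/3 = (3:ℝ)⁻¹ by norm_num]
        exact inv_anti₀ (by norm_num) h4
      refine ⟨2, by norm_num, le_refl _, ?_⟩
      have hf1 : (1:ℝ) ≤ ⌊t 1⌋ := by exact_mod_cast S.floor_pos (by norm_num)
      have : u 1 - ⌊t 1⌋ < 0 := by linarith
      rw [S.u_rec]
      exact inv_neg''.mpr this
    · -- u 0 < t 0 : u 0 ≤ t 0 - 3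
      have h3 : u 0 + 3 ≤ t 0 := by
        rw [abs_of_pos (by linarith)] at hd3; linarith
      have hf0 : t 0 < ⌊t 0⌋ + 1 := Int.lt_floor_add_one _
      have h4 : u 0 - ⌊t 0⌋ < -2 := by linarith
      refine ⟨1, le_refl _, by norm_num, ?_⟩
      rw [S.u_rec]
      exact inv_neg''.mpr (by linarith)
  obtain ⟨k, hk1, hk2, hku⟩ := hk
  -- all i ≥ k+1 are reduced
  have main : ∀ i, k + 1 ≤ i → -1 < u i ∧ u i < 0 := by
    intro i hi
    induction i with
    | zero => omega
    | succ n ih =>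
      rcases Nat.lt_or_ge n (k+1) with h | h
      · have hnk : n = k := by omega
        rw [hnk]
        exact step k hk1 hku
      · have hn := ih (by omega)
        exact step n (by omega) hn.2
  intro i hi
  exact main i (by omega)


/-- algebra: transporting a quadratic equation down one continued-fraction step -/
lemma dstep {a : ℤ} {w w' : ℝ} (A B E : ℤ) (hrec : w' = (w - a)⁻¹) (hne : w - (a:ℝ) ≠ 0)
    (h : (A:ℝ) * w'^2 + B * w' + E = 0) :
    ((E:ℤ):ℝ) * w^2 + ((B - 2*a*E : ℤ):ℝ) * w + ((A - a*B + a^2*E : ℤ):ℝ) = 0 := by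
  have key : ((E:ℤ):ℝ) * w^2 + ((B - 2*a*E : ℤ):ℝ) * w + ((A - a*B + a^2*E : ℤ):ℝ)
      = (w - a)^2 * ((A:ℝ) * w'^2 + B * w' + E) := by
    rw [hrec]
    push_cast
    field_simp
    ring
  rw [key, h, mul_zero]

/-- algebra: transporting a quadratic equation up one continued-fraction step -/
lemma ustep {a : ℤ} {w w' : ℝ} (A B E : ℤ) (hrec : w' = (w - a)⁻¹) (hne : w - (a:ℝ) ≠ 0)
    (h : (A:ℝ) * w^2 + B * w + E = 0) :
    ((A*a^2 + B*a + E : ℤ):ℝ) * w'^2 + ((2*A*a + B : ℤ):ℝ) * w' + ((A:ℤ):ℝ) = 0 := by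
  have hw' : w' ≠ 0 := by rw [hrec]; exact inv_ne_zero hne
  have hw : w = a + w'⁻¹ := by rw [hrec, inv_inv]; ring
  have key : ((A*a^2 + B*a + E : ℤ):ℝ) * w'^2 + ((2*A*a + B : ℤ):ℝ) * w' + ((A:ℤ):ℝ)
      = w'^2 * ((A:ℝ) * w^2 + B * w + E) := by
    rw [hw]
    push_cast
    field_simp
    ring
  rw [key, h, mul_zero]

lemma vieta {A B E x y : ℝ} (hA : A ≠ 0) (hx : A*x^2 + B*x + E = 0)
    (hy : A*y^2 + B*y + E = 0) (hxy : x ≠ y) :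
    A * (x + y) = -B ∧ E = A * (x*y) ∧ (x-y)^2 * A^2 = B^2 - 4*A*E := by
  have h1 : (x - y) * (A*(x+y) + B) = 0 := by linear_combination hx - hy
  have h2 : A*(x+y) + B = 0 := by
    rcases mul_eq_zero.mp h1 with h | h
    · exact absurd (sub_eq_zero.mp h) hxy
    · exact h
  have h3 : A * (x+y) = -B := by linarith
  have h4 : E = A * (x*y) := by linear_combination hx - x * h2
  exact ⟨h3, h4, by linear_combination (A*(x+y) - B) * h3 + 4*A*h4⟩

lemma three_roots {A B E x y z : ℝ} (hA : A ≠ 0) (hx : A*x^2 + B*x + E = 0)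
    (hy : A*y^2 + B*y + E = 0) (hz : A*z^2 + B*z + E = 0)
    (hxy : x ≠ y) (hxz : x ≠ z) (hyz : y ≠ z) : False := by
  have h1 : (x - y) * (A*(x+y) + B) = 0 := by linear_combination hx - hy
  have h2 : A*(x+y) + B = 0 := by
    rcases mul_eq_zero.mp h1 with h | h
    · exact absurd (sub_eq_zero.mp h) hxy
    · exact h
  have h3 : (x - z) * (A*(x+z) + B) = 0 := by linear_combination hx - hz
  have h4 : A*(x+z) + B = 0 := by
    rcases mul_eq_zero.mp h3 with h | h
    · exact absurd (sub_eq_zero.mp h) hxz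
    · exact h
  have h5 : A * (y - z) = 0 := by linear_combination h2 - h4
  rcases mul_eq_zero.mp h5 with h | h
  · exact hA h
  · exact hyz (by linarith [sub_eq_zero.mp h])


def mseq (b : ℕ → ℤ) : ℕ → ℤ × ℤ × ℤ × ℤ
  | 0 => (1, 0, 0, 1)
  | k+1 =>
    let M := mseq b k
    (M.1 * b k + M.2.1, M.1, M.2.2.1 * b k + M.2.2.2, M.2.2.1)

/-- invariants of the matrix recursion along the tails starting at index 3 -/
lemma CFSys.minv (S : CFSys t u) (k : ℕ) :
    (t 3 * (((mseq (fun j => ⌊t (3+j)⌋) k).2.2.1 : ℝ) * t (3+k) + ((mseq (fun j => ⌊t (3+j)⌋) k).2.2.2 : ℝ))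
        = ((mseq (fun j => ⌊t (3+j)⌋) k).1 : ℝ) * t (3+k) + ((mseq (fun j => ⌊t (3+j)⌋) k).2.1 : ℝ)) ∧
    (((mseq (fun j => ⌊t (3+j)⌋) k).2.2.1 : ℝ) * t (3+k) + ((mseq (fun j => ⌊t (3+j)⌋) k).2.2.2 : ℝ) ≠ 0) ∧
    (u 3 * (((mseq (fun j => ⌊t (3+j)⌋) k).2.2.1 : ℝ) * u (3+k) + ((mseq (fun j => ⌊t (3+j)⌋) k).2.2.2 : ℝ))
        = ((mseq (fun j => ⌊t (3+j)⌋) k).1 : ℝ) * u (3+k) + ((mseq (fun j => ⌊t (3+j)⌋) k).2.1 : ℝ)) ∧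
    (((mseq (fun j => ⌊t (3+j)⌋) k).2.2.1 : ℝ) * u (3+k) + ((mseq (fun j => ⌊t (3+j)⌋) k).2.2.2 : ℝ) ≠ 0) ∧
    (0 ≤ (mseq (fun j => ⌊t (3+j)⌋) k).1 ∧ 0 ≤ (mseq (fun j => ⌊t (3+j)⌋) k).2.1 ∧
      0 ≤ (mseq (fun j => ⌊t (3+j)⌋) k).2.2.1 ∧ 0 ≤ (mseq (fun j => ⌊t (3+j)⌋) k).2.2.2) ∧
    ((mseq (fun j => ⌊t (3+j)⌋) k).1 ≤ ∏ j ∈ Finset.range k, (⌊t (3+j)⌋ + 1) ∧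
      (mseq (fun j => ⌊t (3+j)⌋) k).2.1 ≤ ∏ j ∈ Finset.range k, (⌊t (3+j)⌋ + 1) ∧
      (mseq (fun j => ⌊t (3+j)⌋) k).2.2.1 ≤ ∏ j ∈ Finset.range k, (⌊t (3+j)⌋ + 1) ∧
      (mseq (fun j => ⌊t (3+j)⌋) k).2.2.2 ≤ ∏ j ∈ Finset.range k, (⌊t (3+j)⌋ + 1)) ∧
    ((mseq (fun j => ⌊t (3+j)⌋) k).1 * (mseq (fun j => ⌊t (3+j)⌋) k).2.2.2
      - (mseq (fun j => ⌊t (3+j)⌋) k).2.1 * (mseq (fun j => ⌊t (3+j)⌋) k).2.2.1 = (-1)^k) ∧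
    (1 ≤ (mseq (fun j => ⌊t (3+j)⌋) k).2.2.1 + (mseq (fun j => ⌊t (3+j)⌋) k).2.2.2) ∧
    (1 ≤ k → 1 ≤ (mseq (fun j => ⌊t (3+j)⌋) k).2.2.1) := by
  set b : ℕ → ℤ := fun j => ⌊t (3+j)⌋ with hb
  induction k with
  | zero => simp [mseq]
  | succ k ih =>
    obtain ⟨c1, c2, c3, c4, ⟨n1, n2, n3, n4⟩, ⟨b1, b2, b3, b4⟩, cdet, cgd, cg⟩ := ih
    set M := mseq b k with hM
    have hmk : mseq b (k+1) = (M.1 * b k + M.2.1, M.1, M.2.2.1 * b k + M.2.2.2, M.2.2.1) := rfl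
    have hbk : 1 ≤ b k := S.floor_pos (i := 3+k) (by omega)
    have hbkR : (1:ℝ) ≤ (b k : ℝ) := by exact_mod_cast hbk
    have hPpos : 0 < ∏ j ∈ Finset.range k, (b j + 1) :=
      Finset.prod_pos (fun j hj => by have : 1 ≤ b j := S.floor_pos (i := 3+j) (by omega); omega)
    have hPsucc : ∏ j ∈ Finset.range (k+1), (b j + 1) = (∏ j ∈ Finset.range k, (b j + 1)) * (b k + 1) :=
      Finset.prod_range_succ _ _
    -- real recurrences
    have htk : t (3+k) = (b k : ℝ) + (t (3+(k+1)))⁻¹ := by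
      have := S.t_eq (3+k)
      simpa [hb, show 3+k+1 = 3+(k+1) by omega] using this
    have huk : u (3+k) = (b k : ℝ) + (u (3+(k+1)))⁻¹ := by
      have := S.u_eq (3+k)
      simpa [hb, show 3+k+1 = 3+(k+1) by omega] using this
    have htne : t (3+(k+1)) ≠ 0 := S.t_ne_zero _
    have hune : u (3+(k+1)) ≠ 0 := S.u_ne_zero _
    rw [hmk]
    dsimp only
    refine ⟨?_, ?_, ?_, ?_, ⟨by nlinarith, n1, by nlinarith, n3⟩,
      ⟨?_, ?_, ?_, ?_⟩, ?_, by nlinarith, fun _ => by nlinarith⟩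
    · -- c1 step
      rw [htk] at c1
      push_cast at c1 ⊢
      field_simp at c1 ⊢
      linear_combination c1
    · -- c2 step
      have e : ((M.2.2.1:ℝ) * (b k) + (M.2.2.2:ℝ)) * t (3+(k+1)) + (M.2.2.1 : ℝ)
          = ((M.2.2.1:ℝ) * t (3+k) + M.2.2.2) * t (3+(k+1)) := by
        rw [htk]; field_simp; ring
      push_cast
      rw [e]
      exact mul_ne_zero c2 htne
    · rw [huk] at c3
      push_cast at c3 ⊢
      field_simp at c3 ⊢
      linear_combination c3
    · have e : ((M.2.2.1:ℝ) * (b k) + (M.2.2.2:ℝ)) * u (3+(k+1)) + (M.2.2.1 : ℝ)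
          = ((M.2.2.1:ℝ) * u (3+k) + M.2.2.2) * u (3+(k+1)) := by
        rw [huk]; field_simp; ring
      push_cast
      rw [e]
      exact mul_ne_zero c4 hune
    · rw [hPsucc]; nlinarith
    · rw [hPsucc]; nlinarith
    · rw [hPsucc]; nlinarith
    · rw [hPsucc]; nlinarith
    · rw [pow_succ]
      linear_combination (-1 : ℤ) * cdet

lemma zstep {A B E a : ℤ} (h1 : E = 0) (h2 : B - 2*a*E = 0) (h3 : A - a*B + a^2*E = 0) :
    A = 0 ∧ B = 0 ∧ E = 0 :=
  ⟨by linear_combination h3 + a*h2 + a^2*h1, by linear_combination h2 + 2*a*h1, h1⟩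

/-- transport an integer quadratic satisfied by both tails down to index 0 -/
lemma CFSys.descend (S : CFSys t u) (A B E : ℤ) (k : ℕ)
    (ht : (A:ℝ)*(t k)^2 + B*(t k) + E = 0)
    (hu : (A:ℝ)*(u k)^2 + B*(u k) + E = 0) :
    ∃ A' B' E' : ℤ, ((A':ℝ)*(t 0)^2 + B'*(t 0) + E' = 0) ∧ ((A':ℝ)*(u 0)^2 + B'*(u 0) + E' = 0)
      ∧ B'^2 - 4*A'*E' = B^2 - 4*A*E
      ∧ ((A' = 0 ∧ B' = 0 ∧ E' = 0) → (A = 0 ∧ B = 0 ∧ E = 0)) := by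
  induction k generalizing A B E with
  | zero => exact ⟨A, B, E, ht, hu, rfl, fun h => h⟩
  | succ k ih =>
    have ht' := dstep A B E (S.t_rec k) (S.t_ne k) ht
    have hu' := dstep A B E (S.u_rec k) (S.u_ne k) hu
    obtain ⟨A', B', E', p1, p2, p3, p4⟩ := ih _ _ _ ht' hu'
    refine ⟨A', B', E', p1, p2, ?_, ?_⟩
    · rw [p3]; ring
    · intro h
      have h' := p4 h
      exact zstep h'.1 h'.2.1 h'.2.2

set_option maxHeartbeats 2000000 in
lemma CFSys.main_bound (S : CFSys t u) (hfun : ∀ i j, t i = t j → u i = u j)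
    (hd3 : 3 ≤ |t 0 - u 0|) {p N : ℕ} (hp : 0 < p)
    (hper : ∀ m, N ≤ m → ⌊t (m + p)⌋ = ⌊t m⌋) :
    |t 0 - u 0| ≤ 2 * ∏ j ∈ Finset.range p, ((⌊t (3+j)⌋ : ℝ) + 1) + 2 := by
  have hred := S.u_red hd3
  have htail : ∀ m, N ≤ m → t (m + p) = t m := by
    intro m hm
    refine S.unique (fun j => ?_)
    have h1 := hper (m + j) (le_trans hm (Nat.le_add_right _ _))
    simpa [show m + j + p = m + p + j by omega] using h1
  have hudet : ∀ m, 3 ≤ m → ⌊(⌊t m⌋ : ℝ) - u m⌋ = ⌊t m⌋ := by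
    intro m hm
    obtain ⟨hm1, hm2⟩ := hred m hm
    refine Int.floor_eq_iff.mpr ⟨by linarith, by push_cast; linarith⟩
  have hueq : ∀ m, (u (m+1))⁻¹ = u m - ⌊t m⌋ := by
    intro m
    have := S.u_eq m
    linarith
  have hdown : ∀ j m, 3 ≤ m → N ≤ m + j → t (m + p) = t m := by
    intro j
    induction j with
    | zero => intro m h3 hN; exact htail m (by simpa using hN)
    | succ j ih =>
      intro m h3 hN
      by_cases hc : N ≤ m + j
      · exact ih m h3 hc
      · have h1 : t (m+1 + p) = t (m+1) := ih (m+1) (by omega) (by omega)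
        have hu1 : u (m+1 + p) = u (m+1) := hfun _ _ h1
        have ha : ⌊t (m + p)⌋ = ⌊t m⌋ := by
          have e1 : (⌊t (m+p)⌋ : ℝ) - u (m+p) = (⌊t m⌋ : ℝ) - u m
              + ((⌊t (m+p)⌋ : ℝ) - u (m+p) - (⌊t m⌋ : ℝ) + u m) := by ring
          -- use inverse identities
          have i1 := hueq (m+p)
          have i2 := hueq m
          rw [show m + p + 1 = m + 1 + p by omega, hu1] at i1
          -- (u (m+1))⁻¹ = u (m+p) - ⌊t (m+p)⌋ and = u m - ⌊t m⌋
          have e2 : (⌊t (m+p)⌋ : ℝ) - u (m+p) = (⌊t m⌋ : ℝ) - u m := by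
            have := i1.symm.trans i2
            push_cast at this ⊢
            linarith
          have := hudet (m+p) (by omega)
          rw [e2, hudet m h3] at this
          exact this.symm
        have e1 := S.t_eq (m+p)
        have e2 := S.t_eq m
        rw [show m + p + 1 = m + 1 + p by omega, h1] at e1
        rw [e1, e2, ha]
  have h3p : t (3 + p) = t 3 := hdown N 3 (by norm_num) (by omega)
  have hu3p : u (3 + p) = u 3 := hfun _ _ h3p
  obtain ⟨c1, c2, c3, c4, ⟨n1,n2,n3,n4⟩, ⟨b1,b2,b3,b4⟩, cdet, cgd, cg⟩ := S.minv p
  rw [h3p] at c1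
  rw [hu3p] at c3
  set Aq := (mseq (fun j => ⌊t (3+j)⌋) p).1 with hAq
  set Bq := (mseq (fun j => ⌊t (3+j)⌋) p).2.1 with hBq
  set Cq := (mseq (fun j => ⌊t (3+j)⌋) p).2.2.1 with hCq
  set Dq := (mseq (fun j => ⌊t (3+j)⌋) p).2.2.2 with hDq
  set P := ∏ j ∈ Finset.range p, (⌊t (3+j)⌋ + 1) with hP
  have hPpos : 0 < P :=
    Finset.prod_pos (fun j hj => by
      have : 1 ≤ ⌊t (3+j)⌋ := S.floor_pos (i := 3+j) (by omega); omega)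
  have hCq1 : 1 ≤ Cq := cg hp
  have qt3 : ((Cq:ℤ):ℝ) * (t 3)^2 + ((Dq - Aq : ℤ):ℝ) * t 3 + ((-Bq : ℤ):ℝ) = 0 := by
    push_cast
    linear_combination c1
  have qu3 : ((Cq:ℤ):ℝ) * (u 3)^2 + ((Dq - Aq : ℤ):ℝ) * u 3 + ((-Bq : ℤ):ℝ) = 0 := by
    push_cast
    linear_combination c3
  obtain ⟨A0, B0, E0, q0t, q0u, hdisc, hzz⟩ := S.descend Cq (Dq - Aq) (-Bq) 3 qt3 qu3
  have htu0 : t 0 ≠ u 0 := by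
    intro h; rw [h] at hd3; simp at hd3; linarith
  have hA0 : A0 ≠ 0 := by
    intro h0
    rw [h0] at q0t q0u
    have q0t' : (B0:ℝ) * t 0 + E0 = 0 := by push_cast at q0t; linarith
    have hB0 : B0 = 0 := by
      by_contra hB
      have hBR : (B0:ℝ) ≠ 0 := Int.cast_ne_zero.mpr hB
      refine S.t_irr 0 ⟨(-E0 : ℚ)/(B0 : ℚ), ?_⟩
      push_cast
      field_simp
      linear_combination -q0t'
    rw [hB0] at q0t'
    have hE0 : E0 = 0 := by
      have : (E0:ℝ) = 0 := by push_cast at q0t'; linarith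
      exact_mod_cast this
    obtain ⟨z1, _, _⟩ := hzz ⟨h0, hB0, hE0⟩
    omega
  have hA0R : (A0:ℝ) ≠ 0 := Int.cast_ne_zero.mpr hA0
  obtain ⟨_, _, hv⟩ := vieta hA0R q0t q0u htu0
  have hone : (1:ℤ) ≤ A0^2 := by rcases hA0.lt_or_gt with h | h <;> nlinarith
  have hpow : (-1:ℤ)^p = 1 ∨ (-1:ℤ)^p = -1 := by
    rcases Nat.even_or_odd p with h | h
    · exact Or.inl (Even.neg_one_pow h)
    · exact Or.inr (Odd.neg_one_pow h)
  have hkey : B0^2 - 4*A0*E0 ≤ (2*P + 2)^2 := by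
    rw [hdisc]
    have h1 : (Dq - Aq)^2 - 4*Cq*(-Bq) = (Aq + Dq)^2 - 4*(Aq*Dq - Bq*Cq) := by ring
    rw [h1, cdet]
    rcases hpow with h | h <;> rw [h] <;> nlinarith [b1, b4, n1, n4, hPpos]
  have hvR : (t 0 - u 0)^2 * (A0:ℝ)^2 = ((B0^2 - 4*A0*E0 : ℤ) : ℝ) := by
    push_cast
    linear_combination hv
  have hcast : ((B0^2 - 4*A0*E0 : ℤ):ℝ) ≤ (((2*P+2)^2 : ℤ):ℝ) := by exact_mod_cast hkey
  have honeR : (1:ℝ) ≤ (A0:ℝ)^2 := by exact_mod_cast hone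
  have hPposR : (1:ℝ) ≤ (P:ℝ) := by exact_mod_cast hPpos
  have hgoalRHS : 2 * ∏ j ∈ Finset.range p, ((⌊t (3+j)⌋:ℝ) + 1) + 2 = ((2*P+2 : ℤ):ℝ) := by
    rw [hP]
    push_cast
    ring
  rw [hgoalRHS]
  have h2 : (t 0 - u 0)^2 ≤ (((2*P+2) : ℤ):ℝ)^2 := by
    have e : (((2*P+2)^2 : ℤ):ℝ) = (((2*P+2) : ℤ):ℝ)^2 := by push_cast; ring
    rw [e] at hcast
    nlinarith [sq_nonneg (t 0 - u 0)]
  have hQ : (0:ℝ) ≤ ((2*P+2 : ℤ):ℝ) := by push_cast; linarith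
  nlinarith [abs_nonneg (t 0 - u 0), sq_abs (t 0 - u 0)]


/-- transport an integer quadratic satisfied by both tails up to any index -/
lemma CFSys.ascend (S : CFSys t u) (A B E : ℤ)
    (ht : (A:ℝ)*(t 0)^2 + B*(t 0) + E = 0)
    (hu : (A:ℝ)*(u 0)^2 + B*(u 0) + E = 0)
    (hnz : ¬(A = 0 ∧ B = 0 ∧ E = 0)) (k : ℕ) :
    ∃ A' B' E' : ℤ, ((A':ℝ)*(t k)^2 + B'*(t k) + E' = 0) ∧ ((A':ℝ)*(u k)^2 + B'*(u k) + E' = 0)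
      ∧ B'^2 - 4*A'*E' = B^2 - 4*A*E ∧ ¬(A' = 0 ∧ B' = 0 ∧ E' = 0) := by
  induction k with
  | zero => exact ⟨A, B, E, ht, hu, rfl, hnz⟩
  | succ k ih =>
    obtain ⟨A', B', E', p1, p2, p3, p4⟩ := ih
    refine ⟨A'*⌊t k⌋^2 + B'*⌊t k⌋ + E', 2*A'*⌊t k⌋ + B', A',
      ustep A' B' E' (S.t_rec k) (S.t_ne k) p1,
      ustep A' B' E' (S.u_rec k) (S.u_ne k) p2, ?_, ?_⟩
    · rw [← p3]; ring
    · rintro ⟨z1, z2, z3⟩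
      refine p4 ⟨z3, ?_, ?_⟩
      · linear_combination z2 - 2*⌊t k⌋*z3
      · linear_combination z1 - ⌊t k⌋*z2 + ⌊t k⌋^2*z3

set_option maxHeartbeats 1600000 in
/-- Lagrange: eventual periodicity of the partial quotients -/
lemma CFSys.lagrange (S : CFSys t u) (hd3 : 3 ≤ |t 0 - u 0|)
    (A B E : ℤ) (hnz : ¬(A = 0 ∧ B = 0 ∧ E = 0))
    (hqt : (A:ℝ)*(t 0)^2 + B*(t 0) + E = 0) (hqu : (A:ℝ)*(u 0)^2 + B*(u 0) + E = 0) :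
    ∃ p, 0 < p ∧ ∃ N : ℕ, ∀ m, N ≤ m → ⌊t (m + p)⌋ = ⌊t m⌋ := by
  have hred := S.u_red hd3
  choose FA FB FE h1 h2 h3 h4 using S.ascend A B E hqt hqu hnz
  set D0 := B^2 - 4*A*E with hD0
  have hAne : ∀ i, FA i ≠ 0 := by
    intro i h0
    have q' : (FB i:ℝ) * t i + FE i = 0 := by
      have := h1 i; rw [h0] at this; push_cast at this; linarith
    have hB0 : FB i = 0 := by
      by_contra hB
      have hBR : ((FB i):ℝ) ≠ 0 := Int.cast_ne_zero.mpr hB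
      refine S.t_irr i ⟨(-(FE i) : ℚ)/((FB i) : ℚ), ?_⟩
      push_cast
      field_simp
      linear_combination -q'
    have hE0 : FE i = 0 := by
      rw [hB0] at q'
      have : (FE i:ℝ) = 0 := by push_cast at q'; linarith
      exact_mod_cast this
    exact h4 i ⟨h0, hB0, hE0⟩
  have hbounds : ∀ i, 3 ≤ i → (FA i)^2 ≤ D0 ∧ (FB i)^2 ≤ D0 ∧ (FE i)^2 ≤ D0 := by
    intro i hi
    have hAR : (FA i:ℝ) ≠ 0 := Int.cast_ne_zero.mpr (hAne i)
    have ht1 : 1 < t i := S.t_gt_one (by omega)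
    obtain ⟨hu1, hu2⟩ := hred i hi
    have htune : t i ≠ u i := by intro h; rw [h] at ht1; linarith
    obtain ⟨hv1, hv2, hv3⟩ := vieta hAR (h1 i) (h2 i) htune
    have hDR : ((FB i):ℝ)^2 - 4*(FA i)*(FE i) = (D0:ℝ) := by
      have := h3 i
      push_cast [← this]
      ring
    rw [hDR] at hv3
    have htu1 : 1 < t i - u i := by linarith
    have htu2 : (1:ℝ) ≤ (t i - u i)^2 := by nlinarith
    have hAb : ((FA i):ℝ)^2 ≤ (D0:ℝ) := by nlinarith [sq_nonneg ((FA i):ℝ)]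
    have hBsq : ((FB i):ℝ)^2 = ((FA i):ℝ)^2 * (t i + u i)^2 := by
      linear_combination (-(FA i:ℝ)*(t i + u i) + FB i) * hv1
    have hsum : (0:ℝ) ≤ t i + u i := by linarith
    have hsumle : (t i + u i)^2 ≤ (t i - u i)^2 := by nlinarith
    have hBb : ((FB i):ℝ)^2 ≤ (D0:ℝ) := by nlinarith [sq_nonneg ((FA i):ℝ)]
    have hEsq : ((FE i):ℝ)^2 = ((FA i):ℝ)^2 * (t i)^2 * (u i)^2 := by
      linear_combination ((FA i:ℝ)*(t i * u i) + FE i) * hv2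
    have husq : (u i)^2 ≤ 1 := by nlinarith
    have htsq : (t i)^2 ≤ (t i - u i)^2 := by nlinarith
    have s1 : ((FA i):ℝ)^2 * (t i)^2 * (u i)^2 ≤ ((FA i):ℝ)^2 * (t i)^2 := by
      nlinarith [sq_nonneg ((FA i:ℝ) * t i)]
    have s2 : ((FA i):ℝ)^2 * (t i)^2 ≤ ((FA i):ℝ)^2 * (t i - u i)^2 := by
      nlinarith [sq_nonneg ((FA i):ℝ)]
    have hEb : ((FE i):ℝ)^2 ≤ (D0:ℝ) := by
      rw [hEsq]
      nlinarith [hv3]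
    exact ⟨by exact_mod_cast hAb, by exact_mod_cast hBb, by exact_mod_cast hEb⟩
  -- pigeonhole
  set K : ℕ := ((2*D0+1).toNat)^3 with hK
  set T : Finset (ℤ × ℤ × ℤ) :=
    (Finset.Icc (-D0) D0) ×ˢ (Finset.Icc (-D0) D0) ×ˢ (Finset.Icc (-D0) D0) with hT
  have hTcard : T.card = K := by
    rw [hT, Finset.card_product, Finset.card_product, Int.card_Icc]
    have : (D0 + 1 - -D0) = 2*D0 + 1 := by ring
    rw [this, hK]
    ring
  have hscard : (Finset.Icc 3 (3 + K)).card = K + 1 := by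
    rw [Nat.card_Icc]; omega
  have hmaps : ∀ i ∈ Finset.Icc 3 (3 + K), (FA i, FB i, FE i) ∈ T := by
    intro i hi
    have hi3 : 3 ≤ i := (Finset.mem_Icc.mp hi).1
    obtain ⟨c1, c2, c3⟩ := hbounds i hi3
    have sq_le : ∀ a : ℤ, a^2 ≤ D0 → -D0 ≤ a ∧ a ≤ D0 := by
      intro a h
      constructor <;> nlinarith [sq_nonneg (2*a - 1), sq_nonneg (2*a + 1)]
    rw [hT]
    simp only [Finset.mem_product, Finset.mem_Icc]
    exact ⟨⟨(sq_le _ c1).1, (sq_le _ c1).2⟩, ⟨(sq_le _ c2).1, (sq_le _ c2).2⟩,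
      ⟨(sq_le _ c3).1, (sq_le _ c3).2⟩⟩
  have hcardlt : T.card < (Finset.Icc 3 (3 + K)).card := by omega
  obtain ⟨i, hi, j, hj, hij, heq⟩ :=
    Finset.exists_ne_map_eq_of_card_lt_of_maps_to hcardlt hmaps
  -- main argument for ordered pair
  have main : ∀ i j : ℕ, 3 ≤ i → i < j → (FA i, FB i, FE i) = (FA j, FB j, FE j) →
      ∃ p, 0 < p ∧ ∃ N : ℕ, ∀ m, N ≤ m → ⌊t (m + p)⌋ = ⌊t m⌋ := by
    intro i j hi3 hlt heq
    obtain ⟨e1, e2, e3⟩ : FA i = FA j ∧ FB i = FB j ∧ FE i = FE j := by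
      simpa [Prod.ext_iff] using heq
    have hAR : (FA i:ℝ) ≠ 0 := Int.cast_ne_zero.mpr (hAne i)
    have hqtj : (FA i:ℝ)*(t j)^2 + (FB i)*(t j) + (FE i) = 0 := by
      rw [e1, e2, e3]; exact h1 j
    have huj := hred j (by omega)
    have hui := hred i hi3
    have htij : t i = t j := by
      by_contra hne
      have h1' : t i ≠ u i := by
        have := S.t_gt_one (i := i) (by omega); intro h; rw [h] at this; linarith [hui.2]
      have h2' : t j ≠ u i := by
        have := S.t_gt_one (i := j) (by omega); intro h; rw [← h] at hui; linarith [hui.2]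
      exact three_roots hAR (h1 i) hqtj (h2 i) hne h1' h2'
    -- propagate periodicity forwards
    have hper0 : ∀ k, t (i + k + (j - i)) = t (i + k) := by
      intro k
      induction k with
      | zero =>
        have e : i + 0 + (j - i) = j := by omega
        rw [e]
        simpa using htij.symm
      | succ k ih =>
        have e1 : i + (k+1) + (j - i) = (i + k + (j - i)) + 1 := by omega
        have e2 : i + (k+1) = (i + k) + 1 := by omega
        rw [e1, e2, S.t_rec, S.t_rec, ih]
    refine ⟨j - i, by omega, i, fun m hm => ?_⟩
    have e : m + (j - i) = i + (m - i) + (j - i) := by omega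
    rw [e, hper0 (m - i)]
    have e' : i + (m - i) = m := by omega
    rw [e']
  rcases lt_or_gt_of_ne hij with h | h
  · exact main i j (Finset.mem_Icc.mp hi).1 h heq
  · exact main j i (Finset.mem_Icc.mp hj).1 h heq.symm


/-- the K-valued tail sequence -/
noncomputable def tailK (K : IntermediateField ℚ ℝ) (x : K) : ℕ → K
  | 0 => x
  | i+1 => (tailK K x i - ((⌊((tailK K x i : ℝ))⌋ : ℤ) : K))⁻¹

lemma tailK_zero (K : IntermediateField ℚ ℝ) (x : K) : tailK K x 0 = x := rfl

lemma tailK_succ_coe (K : IntermediateField ℚ ℝ) (x : K) (i : ℕ) :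
    ((tailK K x (i+1) : K) : ℝ) = ((tailK K x i : ℝ) - (⌊(tailK K x i : ℝ)⌋ : ℝ))⁻¹ := by
  show (((tailK K x i - ((⌊((tailK K x i : ℝ))⌋ : ℤ) : K))⁻¹ : K) : ℝ) = _
  push_cast
  rfl

lemma tailK_irr (K : IntermediateField ℚ ℝ) (x : K) (hx : Irrational (x:ℝ)) (i : ℕ) :
    Irrational ((tailK K x i : ℝ)) := by
  induction i with
  | zero => exact hx
  | succ i ih =>
    rw [tailK_succ_coe]
    exact ((Irrational.sub_intCast ih _)).inv

lemma prod_mono_real {f : ℕ → ℝ} (hf : ∀ j, 1 ≤ f j) {a b : ℕ} (h : a ≤ b) :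
    ∏ j ∈ Finset.range a, f j ≤ ∏ j ∈ Finset.range b, f j := by
  induction b with
  | zero =>
    have : a = 0 := by omega
    rw [this]
  | succ b ih =>
    rcases Nat.lt_or_ge a (b+1) with h' | h'
    · have h1 := ih (by omega)
      rw [Finset.prod_range_succ]
      have hpos : (0:ℝ) < ∏ j ∈ Finset.range b, f j :=
        Finset.prod_pos (fun j _ => lt_of_lt_of_le zero_lt_one (hf j))
      nlinarith [hf b]
    · have : a = b+1 := by omega
      rw [this]

end Stmt2Aux

open Stmt2Aux in
/-- if the partial quotients satisfy `lim (log a_i(A_n))/n = 0` for all `i ≥ 1`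
and `lim (log |A_n - A_n'|)/n` exists and is positive, then the period lengths are unbounded. -/
theorem stmt_2 (K : IntermediateField ℚ ℝ) (hK : Module.finrank ℚ K = 2)
    (conj : K ≃ₐ[ℚ] K) (hconj : conj ≠ AlgEquiv.refl)
    (A : ℕ → K) (hirr : ∀ n : ℕ, Irrational (A n : ℝ))
    (hai : ∀ i : ℕ, 1 ≤ i →
      Tendsto (fun n : ℕ => Real.log ((cfa (A n : ℝ) i : ℝ)) / (n : ℝ)) atTop (nhds 0))
    (hgrow : ∃ L : ℝ, 0 < L ∧
      Tendsto (fun n : ℕ => Real.log |(A n : ℝ) - ((conj (A n) : K) : ℝ)| / (n : ℝ))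
        atTop (nhds L)) :
    ∀ C : ℕ, ∃ n : ℕ, C < periodLength (A n : ℝ) := by
  by_contra hcon
  push_neg at hcon
  obtain ⟨C, hC⟩ := hcon
  obtain ⟨L, hL, hten⟩ := hgrow
  -- the distance sequence
  set d : ℕ → ℝ := fun n => |(A n : ℝ) - ((conj (A n) : K) : ℝ)| with hd
  -- the per-n continued fraction systems
  have hsys : ∀ n : ℕ, CFSys (fun i => ((tailK K (A n) i : K) : ℝ))
      (fun i => ((conj (tailK K (A n) i) : K) : ℝ)) := by
    intro n
    refine ⟨tailK_irr K (A n) (hirr n), ?_, ?_, ?_⟩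
    · -- u irrational
      intro i ⟨q, hq⟩
      have h1 : conj (tailK K (A n) i) = (q : K) := by
        apply Subtype.coe_injective
        push_cast
        exact hq.symm
      have h2 : tailK K (A n) i = (q : K) := by
        have := congrArg conj.symm h1
        rwa [AlgEquiv.symm_apply_apply, map_ratCast] at this
      refine tailK_irr K (A n) (hirr n) i ⟨q, ?_⟩
      rw [h2]
      push_cast
      rfl
    · intro i
      exact tailK_succ_coe K (A n) i
    · intro i
      show ((conj ((tailK K (A n) i - ((⌊((tailK K (A n) i : ℝ))⌋ : ℤ) : K))⁻¹) : K) : ℝ) = _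
      rw [map_inv₀, map_sub, map_intCast]
      push_cast
      rfl
  -- iterates of the Gauss map are the tails
  have hiter : ∀ n i, cfMap^[i] ((A n : K) : ℝ) = ((tailK K (A n) i : K) : ℝ) := by
    intro n i
    induction i with
    | zero => rfl
    | succ i ih =>
      rw [Function.iterate_succ_apply', ih]
      have hne : Int.fract ((tailK K (A n) i : K) : ℝ) ≠ 0 := by
        intro h
        rw [← Int.self_sub_floor] at h
        have := tailK_irr K (A n) (hirr n) i
        exact this.ne_int ⌊((tailK K (A n) i : K) : ℝ)⌋ (by linarith)
      rw [cfMap, if_neg hne, ← Int.self_sub_floor, tailK_succ_coe]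
  have hcfa : ∀ n i, cfa ((A n : K) : ℝ) i = ⌊((tailK K (A n) i : K) : ℝ)⌋ := by
    intro n i
    rw [cfa, hiter]
  -- integer quadratic for A n and its conjugate
  have : FiniteDimensional ℚ K := FiniteDimensional.of_finrank_eq_succ hK
  have hquad : ∀ n : ℕ, ∃ Az Bz Ez : ℤ, ¬(Az = 0 ∧ Bz = 0 ∧ Ez = 0) ∧
      (Az:ℝ)*((A n : K):ℝ)^2 + Bz*((A n : K):ℝ) + Ez = 0 ∧
      (Az:ℝ)*(((conj (A n) : K)):ℝ)^2 + Bz*(((conj (A n)) : K):ℝ) + Ez = 0 := by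
    intro n
    have hnli : ¬ LinearIndependent ℚ ![(1 : K), A n, (A n)^2] := by
      intro hli
      have := hli.fintype_card_le_finrank
      rw [hK] at this
      simp at this
    obtain ⟨g, hg0, i0, hgi⟩ := Fintype.not_linearIndependent_iff.mp hnli
    rw [Fin.sum_univ_three] at hg0
    simp only [Matrix.cons_val_zero, Matrix.cons_val_one, Matrix.head_cons] at hg0
    have hK0 : (g 2 : K) * (A n)^2 + (g 1 : K) * (A n) + (g 0 : K) = 0 := by
      rw [← hg0]
      simp only [Matrix.cons_val_two, Matrix.tail_cons, Matrix.head_cons, Rat.smul_def]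
      ring
    have hK1 : (g 2 : K) * (conj (A n))^2 + (g 1 : K) * (conj (A n)) + (g 0 : K) = 0 := by
      have h := congrArg conj hK0
      simpa [map_add, map_mul, map_pow, map_ratCast] using h
    have hR0 : ((g 2 : ℚ):ℝ) * ((A n : K):ℝ)^2 + ((g 1 : ℚ):ℝ) * ((A n : K):ℝ)
        + ((g 0 : ℚ):ℝ) = 0 := by
      have h := congrArg (fun y : K => (y : ℝ)) hK0
      push_cast at h
      convert h using 2 <;> push_cast <;> ring
    have hR1 : ((g 2 : ℚ):ℝ) * (((conj (A n)) : K):ℝ)^2 + ((g 1 : ℚ):ℝ) * (((conj (A n)):K):ℝ)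
        + ((g 0 : ℚ):ℝ) = 0 := by
      have h := congrArg (fun y : K => (y : ℝ)) hK1
      push_cast at h
      convert h using 2 <;> push_cast <;> ring
    -- clear denominators
    set q0 := g 0 with hq0
    set q1 := g 1 with hq1
    set q2 := g 2 with hq2
    have hden : ∀ q : ℚ, ((q.num:ℝ)) = (q:ℝ) * (q.den:ℝ) := by
      intro q
      rw [Rat.cast_def]
      field_simp
    have hdpos : (0:ℝ) < (q0.den:ℝ) * (q1.den:ℝ) * (q2.den:ℝ) := by positivity
    refine ⟨q2.num * (q0.den * q1.den), q1.num * (q0.den * q2.den),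
      q0.num * (q1.den * q2.den), ?_, ?_, ?_⟩
    · rintro ⟨hA, hB, hE⟩
      have hdz : ∀ q : ℚ, ((q.den : ℤ)) ≠ 0 := fun q => Int.natCast_ne_zero.mpr q.den_nz
      have hprodz : ∀ q q' : ℚ, ((q.den : ℤ)) * ((q'.den : ℤ)) ≠ 0 :=
        fun q q' => mul_ne_zero (hdz q) (hdz q')
      have hA' : q2.num = 0 := by
        rcases mul_eq_zero.mp hA with h | h
        · exact h
        · exact absurd h (hprodz _ _)
      have hB' : q1.num = 0 := by
        rcases mul_eq_zero.mp hB with h | h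
        · exact h
        · exact absurd h (hprodz _ _)
      have hE' : q0.num = 0 := by
        rcases mul_eq_zero.mp hE with h | h
        · exact h
        · exact absurd h (hprodz _ _)
      have z0 : q0 = 0 := Rat.num_eq_zero.mp hE'
      have z1 : q1 = 0 := Rat.num_eq_zero.mp hB'
      have z2 : q2 = 0 := Rat.num_eq_zero.mp hA'
      fin_cases i0 <;> first | exact hgi z0 | exact hgi z1 | exact hgi z2
    · push_cast
      rw [hden q0, hden q1, hden q2]
      linear_combination ((q0.den:ℝ) * (q1.den:ℝ) * (q2.den:ℝ)) * hR0
    · push_cast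
      rw [hden q0, hden q1, hden q2]
      linear_combination ((q0.den:ℝ) * (q1.den:ℝ) * (q2.den:ℝ)) * hR1
  -- eventual lower bound d n ≥ 3
  have hd3ev : ∀ᶠ n : ℕ in atTop, 3 ≤ d n := by
    have hev1 : ∀ᶠ n : ℕ in atTop, L/2 ≤ Real.log (d n) / n :=
      hten.eventually (eventually_ge_nhds (by linarith))
    have hev2 : ∀ᶠ n : ℕ in atTop, (⌈4/L⌉₊ : ℕ) ≤ n ∧ 1 ≤ n :=
      (eventually_ge_atTop _).and (eventually_ge_atTop 1)
    filter_upwards [hev1, hev2] with n h1 ⟨h2, h3⟩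
    have hn1 : (1:ℝ) ≤ (n:ℝ) := by exact_mod_cast h3
    have hn2 : (4/L : ℝ) ≤ (n:ℝ) := le_trans (Nat.le_ceil _) (by exact_mod_cast h2)
    have hlog2 : (2:ℝ) ≤ Real.log (d n) := by
      have h4 : 4 ≤ (n:ℝ) * L := by
        rw [div_le_iff₀ hL] at hn2
        linarith
      have h5 : (n:ℝ) * (L/2) ≤ Real.log (d n) := by
        rw [le_div_iff₀ (by linarith : (0:ℝ) < (n:ℝ))] at h1
        linarith
      nlinarith
    rcases le_or_gt (d n) 1 with h | h
    · have := Real.log_nonpos (abs_nonneg _) h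
      linarith
    · have := (Real.le_log_iff_exp_le (by linarith)).mp hlog2
      have he : (3:ℝ) ≤ Real.exp 2 := by linarith [Real.add_one_le_exp (2:ℝ)]
      linarith
  -- the central estimate
  have hbound : ∀ n : ℕ, 3 ≤ d n →
      Real.log (d n) ≤ Real.log 4 + C * Real.log 2
        + ∑ j ∈ Finset.range C, Real.log ((cfa ((A n : K):ℝ) (3+j) : ℝ)) := by
    intro n hd3n
    have S := hsys n
    have hfun : ∀ i j, ((tailK K (A n) i : K):ℝ) = ((tailK K (A n) j : K):ℝ) →
        ((conj (tailK K (A n) i) : K):ℝ) = ((conj (tailK K (A n) j) : K):ℝ) := by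
      intro i j h
      have : tailK K (A n) i = tailK K (A n) j := Subtype.coe_injective h
      rw [this]
    have hd3' : 3 ≤ |((tailK K (A n) 0 : K):ℝ) - ((conj (tailK K (A n) 0) : K):ℝ)| := hd3n
    -- Lagrange: the period set is nonempty
    obtain ⟨Az, Bz, Ez, hnz, hqt, hqu⟩ := hquad n
    obtain ⟨p, hp0, N, hper⟩ := S.lagrange hd3' Az Bz Ez hnz hqt hqu
    -- the period length is a genuine period
    have hPL : periodLength ((A n : K):ℝ) =
        sInf {p : ℕ | 0 < p ∧ ∃ N : ℕ, ∀ m ≥ N, cfa ((A n : K):ℝ) (m + p) = cfa ((A n : K):ℝ) m} := by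
      simp only [periodLength]
      rw [if_pos (hirr n)]
    have hne : {p : ℕ | 0 < p ∧ ∃ N : ℕ, ∀ m ≥ N, cfa ((A n : K):ℝ) (m + p) = cfa ((A n : K):ℝ) m}.Nonempty :=
      ⟨p, hp0, N, fun m hm => by rw [hcfa, hcfa]; exact hper m hm⟩
    have hmem := Nat.sInf_mem hne
    rw [← hPL] at hmem
    obtain ⟨hellpos, Nl, hellper⟩ := hmem
    set ell := periodLength ((A n : K):ℝ) with hell
    have hellC : ell ≤ C := hC n
    -- main bound
    have hmb := S.main_bound hfun hd3' hellpos
      (fun m hm => by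
        have := hellper m hm
        rw [hcfa, hcfa] at this
        exact this)
    -- translate floors to cfa and extend the product
    have hfloor1 : ∀ j : ℕ, (1:ℝ) ≤ (cfa ((A n : K):ℝ) (3+j) : ℝ) := by
      intro j
      have h1 : 1 ≤ ⌊((tailK K (A n) (3+j) : K):ℝ)⌋ := S.floor_pos (by omega)
      rw [hcfa n (3+j)]
      exact_mod_cast h1
    -- d n ≤ 2 * P + 2 with the product over range C
    set P : ℝ := ∏ j ∈ Finset.range C, ((cfa ((A n : K):ℝ) (3+j) : ℝ) + 1) with hPdef
    have hdP : d n ≤ 2 * P + 2 := by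
      refine le_trans hmb ?_
      have hext : ∏ j ∈ Finset.range ell, ((⌊((tailK K (A n) (3+j) : K):ℝ)⌋ : ℝ) + 1) ≤ P := by
        rw [hPdef]
        have he : ∀ j, ((⌊((tailK K (A n) (3+j) : K):ℝ)⌋:ℝ) + 1)
            = ((cfa ((A n : K):ℝ) (3+j) : ℝ) + 1) := by
          intro j; rw [hcfa n (3+j)]
        calc ∏ j ∈ Finset.range ell, ((⌊((tailK K (A n) (3+j) : K):ℝ)⌋ : ℝ) + 1)
            ≤ ∏ j ∈ Finset.range C, ((⌊((tailK K (A n) (3+j) : K):ℝ)⌋ : ℝ) + 1) := by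
              refine prod_mono_real (fun j => ?_) hellC
              have := hfloor1 j
              rw [hcfa n (3+j)] at this
              linarith
          _ = _ := Finset.prod_congr rfl (fun j _ => he j)
      linarith
    have haj : ∀ j ∈ Finset.range C, (1:ℝ) ≤ (cfa ((A n:K):ℝ) (3+j) : ℝ) := fun j _ => hfloor1 j
    have hP1 : (1:ℝ) ≤ P := by
      rw [hPdef]
      calc (1:ℝ) = ∏ _j ∈ Finset.range C, (1:ℝ) := by simp
        _ ≤ _ := Finset.prod_le_prod (by intros; norm_num)
              (fun j hj => by have := haj j hj; linarith)
    have hPle : P ≤ 2^C * ∏ j ∈ Finset.range C, (cfa ((A n:K):ℝ) (3+j) : ℝ) := by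
      rw [hPdef]
      calc ∏ j ∈ Finset.range C, ((cfa ((A n:K):ℝ) (3+j):ℝ) + 1)
          ≤ ∏ j ∈ Finset.range C, (2 * (cfa ((A n:K):ℝ) (3+j):ℝ)) :=
            Finset.prod_le_prod (fun j hj => by have := haj j hj; linarith)
              (fun j hj => by have := haj j hj; linarith)
        _ = 2^C * ∏ j ∈ Finset.range C, (cfa ((A n:K):ℝ) (3+j):ℝ) := by
            rw [Finset.prod_mul_distrib, Finset.prod_const, Finset.card_range]
    have hQpos : (0:ℝ) < ∏ j ∈ Finset.range C, (cfa ((A n:K):ℝ) (3+j) : ℝ) :=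
      Finset.prod_pos (fun j hj => lt_of_lt_of_le one_pos (haj j hj))
    have hlog1 : Real.log (d n) ≤
        Real.log (4 * (2^C * ∏ j ∈ Finset.range C, (cfa ((A n:K):ℝ) (3+j):ℝ))) := by
      apply Real.log_le_log (by linarith)
      linarith
    rw [Real.log_mul (by norm_num) (by positivity),
      Real.log_mul (by positivity) (by positivity), Real.log_pow,
      Real.log_prod (fun j hj => by have := haj j hj; linarith)] at hlog1
    calc Real.log (d n) ≤ _ := hlog1
      _ ≤ _ := by
        have h4 : Real.log 4 ≤ Real.log 4 := le_refl _
        linarith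
  -- conclusion via limits
  set g : ℕ → ℝ := fun n => (Real.log 4 + C * Real.log 2)/n
      + ∑ j ∈ Finset.range C, Real.log ((cfa ((A n:K):ℝ) (3+j) : ℝ)) / n with hg
  have hgten : Tendsto g atTop (nhds 0) := by
    have t1 := tendsto_const_div_atTop_nhds_zero_nat (Real.log 4 + C * Real.log 2)
    have t2 : Tendsto (fun n : ℕ => ∑ j ∈ Finset.range C,
        Real.log ((cfa ((A n:K):ℝ) (3+j):ℝ)) / n) atTop (nhds (∑ _j ∈ Finset.range C, 0)) :=
      tendsto_finset_sum _ (fun j _ => hai (3+j) (by omega))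
    have := t1.add t2
    simpa using this
  have hle : (fun n : ℕ => Real.log (d n) / n) ≤ᶠ[atTop] g := by
    filter_upwards [hd3ev, eventually_ge_atTop 1] with n h3 h1
    have hn : (0:ℝ) < (n:ℝ) := by exact_mod_cast h1
    have hb := hbound n h3
    have hdiv : Real.log (d n)/(n:ℝ) ≤ (Real.log 4 + C*Real.log 2
        + ∑ j ∈ Finset.range C, Real.log ((cfa ((A n:K):ℝ) (3+j):ℝ)))/(n:ℝ) :=
      (div_le_div_iff_of_pos_right hn).mpr hb
    rw [add_div, Finset.sum_div] at hdiv
    exact hdiv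
  have hL0 : L ≤ 0 := le_of_tendsto_of_tendsto hten hgten hle
  linarith
end

section
/- Let K = ℚ(α) where α > 1 is a quadratic irrational real number which is a unit in the ring of integers of K. Let (r(n))_n be a sequence of even positive integers with r(n) → ∞ as n → ∞, and set A_n = α^{r(n)} + α^{2r(n)}. Then for all sufficiently large n the continued fraction expansion of A_n is A_n = [tr(A_n) − 1; \overline{1, ⌊α^{r(n)}⌋ − 2, 1, tr(A_n) − 2}]; in particular ℓ(A_n) = 4 for all sufficiently large n, and the sequence (ℓ(A_n))_n of period lengths is bounded. -/
open Polynomial Filter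

/-- one step of the Gauss map, given the floor and the fractional part. -/
lemma cf_step (x : ℝ) (k : ℤ) (f : ℝ) (hfl : ⌊x⌋ = k) (hf : x - k = f) (hf0 : f ≠ 0) :
    cfMap x = f⁻¹ := by
  have hfr : Int.fract x = f := by rw [Int.fract, hfl, hf]
  rw [cfMap, if_neg (by rw [hfr]; exact hf0), hfr]

/-- the integer trace sequence of powers of a quadratic unit. -/
def traceSeq (t e : ℤ) : ℕ → ℤ
  | 0 => 2
  | 1 => t
  | (k+2) => t * traceSeq t e (k+1) - e * traceSeq t e k

lemma traceSeq_spec (t e : ℤ) (α : ℝ) (hunit : α ^ 2 = (t : ℝ) * α - (e : ℝ)) :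
    ∀ k : ℕ, ((traceSeq t e k : ℤ) : ℝ) = α ^ k + ((t : ℝ) - α) ^ k := by
  have hconj : ((t : ℝ) - α) ^ 2 = (t : ℝ) * ((t : ℝ) - α) - (e : ℝ) := by
    linear_combination hunit
  intro k
  induction k using Nat.strong_induction_on with
  | _ k ih =>
    match k with
    | 0 => norm_num [traceSeq]
    | 1 => rw [traceSeq]; push_cast; ring
    | (k+2) =>
      have h1 := ih (k+1) (by omega)
      have h0 := ih k (by omega)
      have hα : α ^ (k+2) = (t : ℝ) * α ^ (k+1) - (e : ℝ) * α ^ k := by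
        calc α ^ (k+2) = α ^ k * α ^ 2 := by ring
        _ = α ^ k * ((t : ℝ) * α - (e : ℝ)) := by rw [hunit]
        _ = (t : ℝ) * α ^ (k+1) - (e : ℝ) * α ^ k := by ring
      have hγ : ((t:ℝ) - α) ^ (k+2)
          = (t : ℝ) * ((t:ℝ) - α) ^ (k+1) - (e : ℝ) * ((t:ℝ) - α) ^ k := by
        calc ((t:ℝ) - α) ^ (k+2) = ((t:ℝ) - α) ^ k * ((t:ℝ) - α) ^ 2 := by ring
        _ = ((t:ℝ) - α) ^ k * ((t : ℝ) * ((t:ℝ) - α) - (e : ℝ)) := by rw [hconj]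
        _ = _ := by ring
      rw [traceSeq]
      push_cast
      rw [hα, hγ, h1, h0]
      ring

/-- `β + β²` is irrational when `β > 1` and `β + β⁻¹` is an integer. -/
lemma irrat_aux (β : ℝ) (hβ : 1 < β) (s : ℤ) (hs : (s : ℝ) = β + β⁻¹) :
    Irrational (β + β ^ 2) := by
  have hβ0 : (0:ℝ) < β := lt_trans zero_lt_one hβ
  have hinv : β * β⁻¹ = 1 := mul_inv_cancel₀ (ne_of_gt hβ0)
  have hquad : β ^ 2 = (s : ℝ) * β - 1 := by
    rw [hs]; linear_combination (-1 : ℝ) * hinv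
  rintro ⟨q, hq⟩
  -- hq : (q : ℝ) = β + β ^ 2
  have hspos : 0 < s := by
    have : (0:ℝ) < (s:ℝ) := by rw [hs]; positivity
    exact_mod_cast this
  have hs1 : ((s : ℝ) + 1) ≠ 0 := by positivity
  set ρ : ℚ := (q + 1) / ((s : ℚ) + 1) with hρdef
  have hρR : (ρ : ℝ) = β := by
    have h1 : ((s : ℝ) + 1) * β = (q : ℝ) + 1 := by
      rw [hq]; linear_combination -hquad
    push_cast [hρdef]
    rw [div_eq_iff hs1, mul_comm]
    linarith [h1]
  have hρquad : ρ ^ 2 = (s : ℚ) * ρ - 1 := by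
    have : ((ρ ^ 2 : ℚ) : ℝ) = (((s : ℚ) * ρ - 1 : ℚ) : ℝ) := by
      push_cast
      rw [hρR]
      exact hquad
    exact_mod_cast this
  have hint : IsIntegral ℤ ρ := by
    refine ⟨X ^ 2 - C s * X + C 1, by monicity!, ?_⟩
    rw [← aeval_def]
    simp only [map_add, map_sub, map_mul, map_pow, aeval_X, aeval_C, map_intCast, map_one,
      eq_intCast, Int.cast_one]
    linear_combination hρquad
  obtain ⟨z, hz⟩ := IsIntegrallyClosed.isIntegral_iff.mp hint
  have hz' : (z : ℚ) = ρ := by rwa [algebraMap_int_eq, eq_intCast] at hz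
  have hzρ : ((z : ℚ) : ℝ) = β := by rw [hz', hρR]
  have hz1 : 1 < z := by
    have : (1:ℝ) < (z:ℝ) := by push_cast at hzρ ⊢; rw [hzρ]; exact hβ
    exact_mod_cast this
  have hzquad : z ^ 2 = s * z - 1 := by
    have : ((z:ℚ)) ^ 2 = (s : ℚ) * (z:ℚ) - 1 := by rw [hz']; exact hρquad
    exact_mod_cast this
  have hdvd : z ∣ 1 := ⟨s - z, by linear_combination hzquad⟩
  have := Int.isUnit_iff.mp (isUnit_of_dvd_one hdvd)
  omega

/-- The main computation for `A = β + β²`, `β ≥ 3`, `β + β⁻¹ = s ∈ ℤ`. -/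
lemma key (β : ℝ) (hβ : 3 ≤ β) (s T : ℤ)
    (hs : (s : ℝ) = β + β⁻¹) (hT : (T : ℝ) = β + β ^ 2 + β⁻¹ + (β⁻¹) ^ 2)
    (hirrA : Irrational (β + β ^ 2)) :
    cfa (β + β ^ 2) 0 = T - 1 ∧
    (∀ j : ℕ, cfa (β + β ^ 2) (4 * j + 1) = 1 ∧
      cfa (β + β ^ 2) (4 * j + 2) = ⌊β⌋ - 2 ∧
      cfa (β + β ^ 2) (4 * j + 3) = 1 ∧
      cfa (β + β ^ 2) (4 * j + 4) = T - 2) ∧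
    periodLength (β + β ^ 2) = 4 := by
  have hβ0 : (0:ℝ) < β := by linarith
  have hβ0' : β ≠ 0 := ne_of_gt hβ0
  have hinv : β * β⁻¹ = 1 := mul_inv_cancel₀ hβ0'
  have hu0 : 0 < β⁻¹ := inv_pos.mpr hβ0
  have hu1 : β⁻¹ ≤ 1/3 := by
    have h := one_div_le_one_div_of_le (by norm_num : (0:ℝ) < 3) hβ
    rw [one_div β] at h; linarith
  have d1 : (0:ℝ) < β ^ 2 - β - 1 := by nlinarith
  have d2 : (0:ℝ) < β + 1 := by linarith
  have d3 : (0:ℝ) < β ^ 2 + β - 1 := by nlinarith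
  have d4 : (0:ℝ) < β ^ 2 + β := by nlinarith
  set A : ℝ := β + β ^ 2 with hAdef
  -- floors
  have fA : ⌊A⌋ = T - 1 := by
    rw [Int.floor_eq_iff]
    push_cast
    rw [hT]
    constructor
    · nlinarith
    · nlinarith
  have f1 : ⌊β ^ 2 / (β ^ 2 - β - 1)⌋ = 1 := by
    rw [Int.floor_eq_iff]
    push_cast
    rw [le_div_iff₀ d1, div_lt_iff₀ d1]
    constructor
    · nlinarith
    · nlinarith
  have f2 : ⌊(β ^ 2 - β - 1) / (β + 1)⌋ = s - 3 := by
    rw [Int.floor_eq_iff]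
    push_cast
    rw [hs, le_div_iff₀ d2, div_lt_iff₀ d2]
    constructor
    · nlinarith
    · nlinarith
  have f3 : ⌊(β ^ 2 + β) / (β ^ 2 + β - 1)⌋ = 1 := by
    rw [Int.floor_eq_iff]
    push_cast
    rw [le_div_iff₀ d3, div_lt_iff₀ d3]
    constructor
    · nlinarith
    · nlinarith
  have f4 : ⌊β ^ 2 + β - 1⌋ = T - 2 := by
    have : β ^ 2 + β - 1 = A - ((1:ℤ) : ℝ) := by push_cast; ring
    rw [this, Int.floor_sub_intCast, fA]
    omega
  have floorβ : ⌊β⌋ = s - 1 := by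
    rw [Int.floor_eq_iff]
    push_cast
    rw [hs]
    constructor
    · nlinarith
    · nlinarith
  -- Gauss map steps
  have hA0 : cfMap A = β ^ 2 / (β ^ 2 - β - 1) := by
    have h := cf_step A (T - 1) ((β ^ 2 - β - 1) / β ^ 2) fA
      (by push_cast; rw [hT]; field_simp; ring) (ne_of_gt (by positivity))
    rw [h, inv_div]
  have h1 : cfMap (β ^ 2 / (β ^ 2 - β - 1)) = (β ^ 2 - β - 1) / (β + 1) := by
    have h := cf_step _ 1 ((β + 1) / (β ^ 2 - β - 1)) f1
      (by push_cast; rw [div_sub_one (ne_of_gt d1)]; congr 1; ring) (ne_of_gt (by positivity))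
    rw [h, inv_div]
  have h2 : cfMap ((β ^ 2 - β - 1) / (β + 1)) = (β ^ 2 + β) / (β ^ 2 + β - 1) := by
    have h := cf_step _ (s - 3) ((β ^ 2 + β - 1) / (β ^ 2 + β)) f2
      (by push_cast; rw [hs]; field_simp; ring) (ne_of_gt (by positivity))
    rw [h, inv_div]
  have h3 : cfMap ((β ^ 2 + β) / (β ^ 2 + β - 1)) = β ^ 2 + β - 1 := by
    have h := cf_step _ 1 (1 / (β ^ 2 + β - 1)) f3
      (by push_cast; rw [div_sub_one (ne_of_gt d3)]; congr 1; ring) (ne_of_gt (by positivity))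
    rw [h, one_div, inv_inv]
  have h4 : cfMap (β ^ 2 + β - 1) = β ^ 2 / (β ^ 2 - β - 1) := by
    have hfr : Int.fract (β ^ 2 + β - 1) = Int.fract A := by
      rw [show β ^ 2 + β - 1 = A - ((1:ℤ) : ℝ) by push_cast; ring, Int.fract_sub_intCast]
    rw [show cfMap (β ^ 2 + β - 1)
        = if Int.fract (β ^ 2 + β - 1) = 0 then 0 else (Int.fract (β ^ 2 + β - 1))⁻¹ from rfl,
      hfr, show (if Int.fract A = 0 then 0 else (Int.fract A)⁻¹) = cfMap A from rfl, hA0]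
  -- periodicity of the orbit
  have hit4 : ∀ y : ℝ, cfMap^[4] y = cfMap (cfMap (cfMap (cfMap y))) := fun _ => rfl
  have hfix : cfMap^[4] (cfMap A) = cfMap A := by
    rw [hit4, hA0, h1, h2, h3, h4]
  have e1 : ∀ j : ℕ, cfMap^[4 * j + 1] A = β ^ 2 / (β ^ 2 - β - 1) := by
    intro j
    rw [Function.iterate_add_apply, Function.iterate_one, Function.iterate_mul,
      Function.iterate_fixed hfix j, hA0]
  have e2 : ∀ j : ℕ, cfMap^[4 * j + 2] A = (β ^ 2 - β - 1) / (β + 1) := by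
    intro j
    rw [show 4 * j + 2 = (4 * j + 1) + 1 from rfl, Function.iterate_succ_apply', e1, h1]
  have e3 : ∀ j : ℕ, cfMap^[4 * j + 3] A = (β ^ 2 + β) / (β ^ 2 + β - 1) := by
    intro j
    rw [show 4 * j + 3 = (4 * j + 2) + 1 from rfl, Function.iterate_succ_apply', e2, h2]
  have e4 : ∀ j : ℕ, cfMap^[4 * j + 4] A = β ^ 2 + β - 1 := by
    intro j
    rw [show 4 * j + 4 = (4 * j + 3) + 1 from rfl, Function.iterate_succ_apply', e3, h3]
  have hquot : ∀ j : ℕ, cfa A (4 * j + 1) = 1 ∧ cfa A (4 * j + 2) = ⌊β⌋ - 2 ∧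
      cfa A (4 * j + 3) = 1 ∧ cfa A (4 * j + 4) = T - 2 := by
    intro j
    refine ⟨?_, ?_, ?_, ?_⟩
    · rw [cfa, e1, f1]
    · rw [cfa, e2, f2, floorβ]; ring
    · rw [cfa, e3, f3]
    · rw [cfa, e4, f4]
  -- size facts for the trace integers
  have hT3 : (3:ℤ) < T := by
    have : (3:ℝ) < (T:ℝ) := by rw [hT]; nlinarith
    exact_mod_cast this
  have hsT : s < T := by
    have : (s:ℝ) < (T:ℝ) := by rw [hs, hT]; nlinarith
    exact_mod_cast this
  -- the period length
  have h4mem : 4 ∈ {p : ℕ | 0 < p ∧ ∃ N : ℕ, ∀ n ≥ N, cfa A (n + p) = cfa A n} := by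
    refine ⟨by norm_num, 1, fun n hn => ?_⟩
    obtain ⟨m, rfl⟩ : ∃ m, n = m + 1 := ⟨n - 1, by omega⟩
    have hiter : cfMap^[m + 5] A = cfMap^[m + 1] A := by
      rw [Function.iterate_add_apply cfMap m 5,
        show (5:ℕ) = 4 + 1 from rfl, Function.iterate_succ_apply, hfix,
        ← Function.iterate_succ_apply]
    show (⌊cfMap^[m + 1 + 4] A⌋ : ℤ) = ⌊cfMap^[m + 1] A⌋
    rw [show m + 1 + 4 = m + 5 from rfl, hiter]
  have hn1 : 1 ∉ {p : ℕ | 0 < p ∧ ∃ N : ℕ, ∀ n ≥ N, cfa A (n + p) = cfa A n} := by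
    rintro ⟨-, N, hN⟩
    have a := hN (4 * N + 3) (by omega)
    rw [show 4 * N + 3 + 1 = 4 * N + 4 from rfl, (hquot N).2.2.2, (hquot N).2.2.1] at a
    omega
  have hn2 : 2 ∉ {p : ℕ | 0 < p ∧ ∃ N : ℕ, ∀ n ≥ N, cfa A (n + p) = cfa A n} := by
    rintro ⟨-, N, hN⟩
    have a := hN (4 * N + 2) (by omega)
    rw [show 4 * N + 2 + 2 = 4 * N + 4 from rfl, (hquot N).2.2.2, (hquot N).2.1] at a
    have : ⌊β⌋ = s - 1 := floorβ
    omega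
  have hn3 : 3 ∉ {p : ℕ | 0 < p ∧ ∃ N : ℕ, ∀ n ≥ N, cfa A (n + p) = cfa A n} := by
    rintro ⟨-, N, hN⟩
    have a := hN (4 * N + 4) (by omega)
    rw [show 4 * N + 4 + 3 = 4 * (N + 1) + 3 by ring, (hquot (N + 1)).2.2.1,
      (hquot N).2.2.2] at a
    omega
  have hper : periodLength A = 4 := by
    rw [periodLength, if_pos hirrA]
    have hle := Nat.sInf_le h4mem
    have hmem := Nat.sInf_mem (⟨4, h4mem⟩ :
      Set.Nonempty {p : ℕ | 0 < p ∧ ∃ N : ℕ, ∀ n ≥ N, cfa A (n + p) = cfa A n})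
    set q := sInf {p : ℕ | 0 < p ∧ ∃ N : ℕ, ∀ n ≥ N, cfa A (n + p) = cfa A n} with hqdef
    have hq0 : 0 < q := hmem.1
    have hq1 : q ≠ 1 := fun h => hn1 (h ▸ hmem)
    have hq2 : q ≠ 2 := fun h => hn2 (h ▸ hmem)
    have hq3 : q ≠ 3 := fun h => hn3 (h ▸ hmem)
    omega
  exact ⟨by rw [cfa]; simpa using fA, hquot, hper⟩


/-- let `α > 1` be a quadratic irrational unit (so `α² = tα - e` with `e = ±1`,
with conjugate `α' = t - α`), and `A_n = α^(r n) + α^(2 r n)` with `r n` even and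
`r n → ∞`.  Then for all large `n` the continued fraction of `A_n` is
`[tr(A_n) - 1; 1, ⌊α^(r n)⌋ - 2, 1, tr(A_n) - 2, 1, ⌊α^(r n)⌋ - 2, …]`, the period length
is `4`, and in particular the period lengths are bounded. -/
theorem stmt_12 (α : ℝ) (hα1 : 1 < α) (hirr : Irrational α)
    (t e : ℤ) (he : e = 1 ∨ e = -1) (hunit : α ^ 2 = (t : ℝ) * α - (e : ℝ))
    (r : ℕ → ℕ) (heven : ∀ n, Even (r n)) (hrpos : ∀ n, 0 < r n)
    (hrinf : Tendsto r atTop atTop)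
    (A : ℕ → ℝ) (hA : ∀ n, A n = α ^ r n + α ^ (2 * r n)) :
    (∀ᶠ n : ℕ in atTop,
      ∃ T : ℤ,
        (T : ℝ) = α ^ r n + α ^ (2 * r n) + ((t : ℝ) - α) ^ r n + ((t : ℝ) - α) ^ (2 * r n) ∧
        cfa (A n) 0 = T - 1 ∧
        (∀ j : ℕ, cfa (A n) (4 * j + 1) = 1 ∧
          cfa (A n) (4 * j + 2) = ⌊α ^ r n⌋ - 2 ∧
          cfa (A n) (4 * j + 3) = 1 ∧
          cfa (A n) (4 * j + 4) = T - 2) ∧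
        periodLength (A n) = 4) ∧
    ∃ B : ℕ, ∀ n : ℕ, periodLength (A n) ≤ B := by
  have htr := traceSeq_spec t e α hunit
  have hconjmul : α * ((t : ℝ) - α) = (e : ℝ) := by linear_combination (-1 : ℝ) * hunit
  -- main eventual statement
  have hev : ∀ᶠ n : ℕ in atTop, (3:ℝ) ≤ α ^ r n := by
    have h1 : Tendsto (fun k : ℕ => α ^ k) atTop atTop :=
      tendsto_pow_atTop_atTop_of_one_lt hα1
    exact (h1.comp hrinf).eventually_ge_atTop 3
  have hmain : ∀ᶠ n : ℕ in atTop,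
      ∃ T : ℤ,
        (T : ℝ) = α ^ r n + α ^ (2 * r n) + ((t : ℝ) - α) ^ r n + ((t : ℝ) - α) ^ (2 * r n) ∧
        cfa (A n) 0 = T - 1 ∧
        (∀ j : ℕ, cfa (A n) (4 * j + 1) = 1 ∧
          cfa (A n) (4 * j + 2) = ⌊α ^ r n⌋ - 2 ∧
          cfa (A n) (4 * j + 3) = 1 ∧
          cfa (A n) (4 * j + 4) = T - 2) ∧
        periodLength (A n) = 4 := by
    filter_upwards [hev] with n hn
    set m : ℕ := r n with hmdef
    set β : ℝ := α ^ m with hβdef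
    have hβ0 : (0:ℝ) < β := pow_pos (by linarith) m
    have hβ3 : (3:ℝ) ≤ β := hn
    -- conjugate power is the inverse
    have hem : ((e : ℝ)) ^ m = 1 := by
      rcases he with rfl | rfl
      · push_cast; exact one_pow m
      · push_cast; exact Even.neg_one_pow (heven n)
    have hprod : β * ((t : ℝ) - α) ^ m = 1 := by
      rw [hβdef, ← mul_pow, hconjmul, hem]
    have hconjpow : ((t : ℝ) - α) ^ m = β⁻¹ :=
      eq_inv_of_mul_eq_one_left (by rw [mul_comm]; exact hprod)
    have hpow2 : α ^ (2 * m) = β ^ 2 := by rw [hβdef, ← pow_mul, mul_comm]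
    have hconjpow2 : ((t : ℝ) - α) ^ (2 * m) = (β⁻¹) ^ 2 := by
      rw [mul_comm, pow_mul, hconjpow]
    set s : ℤ := traceSeq t e m with hsdef
    set T : ℤ := traceSeq t e m + traceSeq t e (2 * m) with hTdef
    have hs : (s : ℝ) = β + β⁻¹ := by
      rw [hsdef, htr m, hconjpow]
    have hT : (T : ℝ) = β + β ^ 2 + β⁻¹ + (β⁻¹) ^ 2 := by
      rw [hTdef]
      push_cast
      rw [htr m, htr (2 * m), hconjpow, hpow2, hconjpow2]
      ring
    have hAn : A n = β + β ^ 2 := by rw [hA n, hpow2]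
    have hirrA : Irrational (β + β ^ 2) := irrat_aux β (by linarith) s hs
    obtain ⟨c0, cq, cp⟩ := key β hβ3 s T hs hT hirrA
    refine ⟨T, ?_, ?_, ?_, ?_⟩
    · rw [hT, hpow2, hconjpow, hconjpow2]
    · rw [hAn]; exact c0
    · rw [hAn]; exact cq
    · rw [hAn]; exact cp
  refine ⟨hmain, ?_⟩
  obtain ⟨N, hN⟩ := eventually_atTop.mp hmain
  refine ⟨(Finset.range N).sup (fun n => periodLength (A n)) + 4, fun n => ?_⟩
  by_cases hn : n < N
  · exact le_trans (Finset.le_sup (f := fun n => periodLength (A n)) (Finset.mem_range.mpr hn)) (Nat.le_add_right _ 4)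
  · obtain ⟨T, -, -, -, hp⟩ := hN n (by omega)
    omega
end

section
/- Let R be a finite set of distinct nonzero complex algebraic numbers and, for each α ∈ R, let p_α ∈ ℂ[X] be a nonzero polynomial (so that B_n = Σ_{α∈R} p_α(n)α^n is a linear recurrence sequence in power sum form). Let d be a positive integer and α_0 ∈ R. Then there exists an integer j with 0 ≤ j < d such that the polynomial Σ_{α∈R, α^d = α_0^d} p_α(dX + j)·α^j ∈ ℂ[X] is nonzero; equivalently, α_0^d occurs as a root of the subsequence (B_{dn+j})_n for at least one j ∈ {0, …, d−1}. -/
open Polynomial Finset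

/-- if `B_n = Σ_{α ∈ R} p_α(n) α^n` is a linear recurrence in power sum form
(with `R` a finite set of distinct nonzero algebraic numbers and `p_α` nonzero polynomials),
`d` a positive integer and `α₀ ∈ R`, then for some `0 ≤ j < d` the coefficient polynomial
`Σ_{α ∈ R, α^d = α₀^d} p_α(dX + j) α^j` of `(α₀^d)^n` in the power sum form of the
subsequence `(B_{dn+j})_n` is nonzero, i.e. `α₀^d` is a root of `(B_{dn+j})_n`. -/
theorem stmt_17 (R : Finset ℂ) (hR0 : (0 : ℂ) ∉ R)
    (halg : ∀ α ∈ R, IsAlgebraic ℚ α)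
    (p : ℂ → Polynomial ℂ) (hp : ∀ α ∈ R, p α ≠ 0)
    (d : ℕ) (hd : 0 < d) (α₀ : ℂ) (hα₀ : α₀ ∈ R) :
    ∃ j : ℕ, j < d ∧
      (∑ α ∈ R.filter (fun α : ℂ => α ^ d = α₀ ^ d),
        (p α).comp (C (d : ℂ) * X + C (j : ℂ)) * C (α ^ j)) ≠ 0 := by
  by_contra hcon
  push_neg at hcon
  set S : Finset ℂ := R.filter (fun α : ℂ => α ^ d = α₀ ^ d) with hS
  have hα₀S : α₀ ∈ S := by simp [hS, hα₀]
  -- the affine substitution is nonconstant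
  have hdC : (d : ℂ) ≠ 0 := Nat.cast_ne_zero.mpr hd.ne'
  -- Step A: for each j < d, the uncomposed sum vanishes
  have hq : ∀ j : ℕ, j < d → (∑ α ∈ S, p α * C (α ^ j)) = 0 := by
    intro j hj
    have h0 := hcon j hj
    set L : Polynomial ℂ := C (d : ℂ) * X + C (j : ℂ) with hL
    have hcomp : (∑ α ∈ S, p α * C (α ^ j)).comp L
        = ∑ α ∈ S, (p α).comp L * C (α ^ j) := by
      simp only [Polynomial.comp, Polynomial.eval₂_finset_sum, Polynomial.eval₂_mul,
        Polynomial.eval₂_C]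
    rw [← hcomp] at h0
    rcases comp_eq_zero_iff.mp h0 with h | ⟨_, h⟩
    · exact h
    · exfalso
      have : L.natDegree = 1 := natDegree_linear hdC
      rw [h] at this
      simp at this
  -- Step B: coefficientwise Vandermonde-style vanishing
  have hSd : S.card ≤ d := by
    have hsub : S ⊆ (X ^ d - C (α₀ ^ d)).roots.toFinset := by
      intro α hα
      rw [Multiset.mem_toFinset, mem_roots (X_pow_sub_C_ne_zero hd _)]
      simp [Polynomial.IsRoot, (Finset.mem_filter.mp hα).2]
    calc S.card ≤ (X ^ d - C (α₀ ^ d)).roots.toFinset.card := Finset.card_le_card hsub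
      _ ≤ Multiset.card (X ^ d - C (α₀ ^ d)).roots := Multiset.toFinset_card_le _
      _ ≤ (X ^ d - C (α₀ ^ d)).natDegree := card_roots' _
      _ = d := natDegree_X_pow_sub_C
  set f : Polynomial ℂ := ∏ β ∈ S.erase α₀, (X - C β) with hf
  have hfdeg : f.natDegree < d := by
    have : f.natDegree = (S.erase α₀).card := by
      rw [hf, natDegree_prod _ _ (fun β _ => X_sub_C_ne_zero β)]
      simp [natDegree_X_sub_C]
    rw [this, Finset.card_erase_of_mem hα₀S]
    omega
  have key : ∀ k : ℕ, (p α₀).coeff k = 0 := by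
    intro k
    -- Σ_{α∈S} (p α).coeff k * α^j = 0 for j < d
    have hcoef : ∀ j : ℕ, j < d → (∑ α ∈ S, (p α).coeff k * α ^ j) = 0 := by
      intro j hj
      have := congrArg (fun q => Polynomial.coeff q k) (hq j hj)
      simp only [finset_sum_coeff, coeff_mul_C] at this
      exact this
    have hsum : (∑ α ∈ S, (p α).coeff k * f.eval α) = 0 := by
      have : ∀ α ∈ S, f.eval α = ∑ j ∈ Finset.range d, f.coeff j * α ^ j :=
        fun α _ => eval_eq_sum_range' hfdeg α
      calc (∑ α ∈ S, (p α).coeff k * f.eval α)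
          = ∑ α ∈ S, ∑ j ∈ Finset.range d, f.coeff j * ((p α).coeff k * α ^ j) := by
            refine Finset.sum_congr rfl fun α hα => ?_
            rw [this α hα, Finset.mul_sum]
            refine Finset.sum_congr rfl fun j _ => by ring
        _ = ∑ j ∈ Finset.range d, f.coeff j * ∑ α ∈ S, (p α).coeff k * α ^ j := by
            rw [Finset.sum_comm]
            exact Finset.sum_congr rfl fun j _ => by rw [Finset.mul_sum]
        _ = 0 := by
            refine Finset.sum_eq_zero fun j hj => ?_
            rw [hcoef j (Finset.mem_range.mp hj), mul_zero]
    -- the sum collapses to the α₀ term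
    have hcollapse : (∑ α ∈ S, (p α).coeff k * f.eval α) = (p α₀).coeff k * f.eval α₀ := by
      refine Finset.sum_eq_single α₀ (fun α hα hne => ?_) (fun h => absurd hα₀S h)
      have : f.eval α = 0 := by
        rw [hf, eval_prod]
        exact Finset.prod_eq_zero (Finset.mem_erase.mpr ⟨hne, hα⟩) (by simp)
      rw [this, mul_zero]
    have hfα₀ : f.eval α₀ ≠ 0 := by
      rw [hf, eval_prod]
      refine Finset.prod_ne_zero_iff.mpr fun β hβ => ?_
      have : β ≠ α₀ := (Finset.mem_erase.mp hβ).1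
      simpa [sub_eq_zero] using fun h => this h.symm
    rw [hcollapse] at hsum
    exact (mul_eq_zero.mp hsum).resolve_right hfα₀
  exact hp α₀ hα₀ (Polynomial.ext key)
end

section
/- Let K ⊆ ℝ be a real quadratic number field and (A_n)_n a sequence with values in K∖ℚ such that there exists β ∈ K∖ℚ with either A_n − A_n′ = β for all n or A_n − A_n′ = (−1)^n β for all n, and such that the sequence of rational numbers (A_n + A_n′)_n has bounded denominators. Then the sequence (ℓ(A_n))_n of period lengths is bounded. -/
open Polynomial Filter

set_option maxHeartbeats 1000000

section Auxiliary

lemma Irrational.inv' {x : ℝ} (hx : Irrational x) : Irrational x⁻¹ := by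
  rintro ⟨q, hq⟩
  have hx0 : x ≠ 0 := fun h => by simp [h] at hq; exact hx ⟨0, by simp [← hq, h]⟩
  have hq0 : (q:ℝ) ≠ 0 := by rw [hq]; exact inv_ne_zero hx0
  exact hx ⟨q⁻¹, by rw [Rat.cast_inv, hq, inv_inv]⟩

lemma sq_eq_sq_sign {u v : ℝ} (hu : u ≠ 0) (h2 : u^2 = v^2) (hsign : 0 ≤ u ↔ 0 ≤ v) : u = v := by
  have h : (u - v) * (u + v) = 0 := by linear_combination h2
  rcases mul_eq_zero.1 h with h' | h'
  · linarith
  · have hv : v ≠ 0 := fun h0 => by rw [h0] at h2; simp at h2; exact hu (by nlinarith)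
    rcases le_or_gt 0 u with h1 | h1
    · have h2' := hsign.1 h1
      have : u = 0 := by linarith
      exact absurd this hu
    · have h3 : ¬ (0 ≤ v) := fun h2' => by
        have := hsign.2 h2'; linarith
      push_neg at h3
      nlinarith

/-- Step lemma: discriminant invariance under `t ↦ (t - m)⁻¹`. -/
lemma quad_step (a b c m : ℤ) (x y : ℝ) (ha : a ≠ 0) (hxy : x ≠ y)
    (hxm : x ≠ (m:ℝ)) (hym : y ≠ (m:ℝ))
    (hqx : (a:ℝ)*x^2 + b*x + c = 0) (hqy : (a:ℝ)*y^2 + b*y + c = 0) :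
    ∃ a' b' c' : ℤ, a' ≠ 0 ∧ b'^2 - 4*a'*c' = b^2 - 4*a*c ∧
      (a':ℝ)*((x-m)⁻¹)^2 + b'*(x-m)⁻¹ + c' = 0 ∧
      (a':ℝ)*((y-m)⁻¹)^2 + b'*(y-m)⁻¹ + c' = 0 := by
  have haR : (a:ℝ) ≠ 0 := Int.cast_ne_zero.2 ha
  have h1 : (x - y) * ((a:ℝ)*(x+y) + b) = 0 := by linear_combination hqx - hqy
  have hsum : (a:ℝ)*(x + y) = -b := by
    rcases mul_eq_zero.1 h1 with h | h
    · exact absurd (by linarith) hxy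
    · linarith
  have hprod : (a:ℝ)*(x*y) = c := by linear_combination x*hsum - hqx
  have hx0 : x - m ≠ 0 := sub_ne_zero.2 hxm
  have hy0 : y - m ≠ 0 := sub_ne_zero.2 hym
  refine ⟨a*m^2 + b*m + c, 2*a*m + b, a, ?_, by ring, ?_, ?_⟩
  · intro h0
    have h0R : (a:ℝ)*m^2 + b*m + c = 0 := by exact_mod_cast congrArg (Int.cast : ℤ → ℝ) h0
    have hfac : (a:ℝ) * (((m:ℝ)) - x) * ((m:ℝ) - y) = 0 := by
      linear_combination h0R - (m:ℝ)*hsum + hprod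
    rcases mul_eq_zero.1 hfac with h | h
    · rcases mul_eq_zero.1 h with h | h
      · exact haR h
      · exact hxm (by linarith)
    · exact hym (by linarith)
  · have key : ((a*m^2+b*m+c : ℤ):ℝ)*((x-m)⁻¹)^2 + ((2*a*m+b : ℤ):ℝ)*(x-m)⁻¹ + (a:ℝ)
        = ((a:ℝ)*x^2+b*x+c) / ((x-m)^2) := by
      push_cast
      field_simp
      ring
    rw [key, hqx, zero_div]
  · have key : ((a*m^2+b*m+c : ℤ):ℝ)*((y-m)⁻¹)^2 + ((2*a*m+b : ℤ):ℝ)*(y-m)⁻¹ + (a:ℝ)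
        = ((a:ℝ)*y^2+b*y+c) / ((y-m)^2) := by
      push_cast
      field_simp
      ring
    rw [key, hqy, zero_div]

/-- Facts about the two roots of an integer quadratic. -/
lemma roots_facts (a b c : ℤ) (ha : a ≠ 0) (x y : ℝ)
    (hqx : (a:ℝ)*x^2 + b*x + c = 0) (hqy : (a:ℝ)*y^2 + b*y + c = 0) (hxy : x ≠ y) :
    (x - y)^2 * (a:ℝ)^2 = ((b^2 - 4*a*c : ℤ) : ℝ) ∧ x*y*(a:ℝ) = (c:ℝ) := by
  have haR : (a:ℝ) ≠ 0 := Int.cast_ne_zero.2 ha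
  have h1 : (x - y) * ((a:ℝ)*(x+y) + b) = 0 := by linear_combination hqx - hqy
  have hsum : (a:ℝ)*(x+y) = -b := by
    rcases mul_eq_zero.1 h1 with h | h
    · exact absurd (by linarith) hxy
    · linarith
  have hprod : x*y*(a:ℝ) = c := by linear_combination x*hsum - hqx
  constructor
  · push_cast
    linear_combination ((a:ℝ)*(x+y) - b) * hsum - 4*(a:ℝ)*hprod
  · exact hprod


lemma core (Δ : ℤ) (hΔ : 0 < Δ) (x y : ℕ → ℝ)
    (hxirr : ∀ k, Irrational (x k))
    (hyirr : ∀ k, Irrational (y k))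
    (hne0 : x 0 ≠ y 0)
    (hstepx : ∀ k, x (k+1) = (x k - ⌊x k⌋)⁻¹)
    (hstepy : ∀ k, y (k+1) = (y k - ⌊x k⌋)⁻¹)
    (hq0 : ∃ a b c : ℤ, a ≠ 0 ∧ b^2 - 4*a*c = Δ ∧
      (a:ℝ)*(x 0)^2 + b*(x 0) + c = 0 ∧ (a:ℝ)*(y 0)^2 + b*(y 0) + c = 0) :
    ∃ N p : ℕ, 0 < p ∧ p ≤ 2*(2*Δ.toNat+1)^2 ∧ x (N + p) = x N := by
  classical
  have hne : ∀ k, x k ≠ y k := by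
    intro k
    induction k with
    | zero => exact hne0
    | succ k ih =>
      rw [hstepx, hstepy]
      intro h
      have hux : x k - ⌊x k⌋ ≠ 0 := sub_ne_zero.2 ((hxirr k).ne_int _)
      have := inv_injective h
      exact ih (by linarith)
  have hquad : ∀ k, ∃ a b c : ℤ, a ≠ 0 ∧ b^2 - 4*a*c = Δ ∧
      (a:ℝ)*(x k)^2 + b*(x k) + c = 0 ∧ (a:ℝ)*(y k)^2 + b*(y k) + c = 0 := by
    intro k
    induction k with
    | zero => exact hq0
    | succ k ih =>
      obtain ⟨a, b, c, ha, hd, hqx, hqy⟩ := ih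
      obtain ⟨a', b', c', ha', hd', hqx', hqy'⟩ :=
        quad_step a b c ⌊x k⌋ (x k) (y k) ha (hne k) ((hxirr k).ne_int _) ((hyirr k).ne_int _) hqx hqy
      exact ⟨a', b', c', ha', by rw [hd', hd], by rw [hstepx]; exact hqx', by rw [hstepy]; exact hqy'⟩
  have hfr : ∀ k, 0 < x k - ⌊x k⌋ ∧ x k - ⌊x k⌋ < 1 := by
    intro k
    constructor
    · rcases lt_or_eq_of_le (Int.floor_le (x k)) with h | h
      · linarith
      · exact absurd h.symm ((hxirr k).ne_int _)
    · linarith [Int.lt_floor_add_one (x k)]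
  have hx1 : ∀ k, 1 < x (k+1) := by
    intro k
    rw [hstepx]
    exact one_lt_inv_iff₀.2 ⟨(hfr k).1, (hfr k).2⟩
  have hfl1 : ∀ k, 1 ≤ ⌊x (k+1)⌋ := fun k => Int.le_floor.2 (by exact_mod_cast (hx1 k).le)
  -- bound on (x k - y k)^2
  have hdbound : ∀ k, (x k - y k)^2 ≤ (Δ:ℝ) := by
    intro k
    obtain ⟨a, b, c, ha, hd, hqx, hqy⟩ := hquad k
    have h := (roots_facts a b c ha (x k) (y k) hqx hqy (hne k)).1
    rw [hd] at h
    have ha2 : (1:ℝ) ≤ (a:ℝ)^2 := by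
      have h0 : (0:ℤ) < a^2 := by positivity
      have h1 : (1:ℤ) ≤ a^2 := Int.lt_iff_add_one_le.mp h0
      exact_mod_cast h1
    nlinarith [sq_nonneg (x k - y k)]
  -- growth identity
  have hgrow : ∀ k, (x (k+1) - y (k+1))^2 = (x k - y k)^2 * (x (k+1))^2 * (y (k+1))^2 := by
    have habs : ∀ u v : ℝ, u ≠ 0 → v ≠ 0 → (u⁻¹ - v⁻¹)^2 = (u - v)^2 * (u⁻¹)^2 * (v⁻¹)^2 := by
      intro u v hu hv
      have h : u⁻¹ - v⁻¹ = (v - u) * u⁻¹ * v⁻¹ := by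
        field_simp
      rw [h]
      ring
    intro k
    rw [hstepx, hstepy]
    have hux : x k - (⌊x k⌋:ℝ) ≠ 0 := sub_ne_zero.2 ((hxirr k).ne_int _)
    have huy : y k - (⌊x k⌋:ℝ) ≠ 0 := sub_ne_zero.2 ((hyirr k).ne_int _)
    have h := habs (x k - (⌊x k⌋:ℝ)) (y k - (⌊x k⌋:ℝ)) hux huy
    rw [show (x k - (⌊x k⌋:ℝ)) - (y k - (⌊x k⌋:ℝ)) = x k - y k by ring] at h
    exact h
  -- Phase A: ∃ k ≥ 1 with y k < 0
  have hA : ∃ k, y (k+1) < 0 := by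
    by_contra hcon
    push_neg at hcon
    -- y (k+1) ≥ 0 for all k; y irrational so y (k+1) > 0
    have hypos : ∀ k, (⌊x k⌋ : ℝ) < y k := by
      intro k
      rcases lt_trichotomy (y k) (⌊x k⌋ : ℝ) with h | h | h
      · exfalso
        have : y (k+1) < 0 := by
          rw [hstepy]
          exact inv_lt_zero.2 (by linarith)
        linarith [hcon k, this]
      · exact absurd h ((hyirr k).ne_int _)
      · exact h
    have hylt : ∀ k, y k < (⌊x k⌋ : ℝ) + 1 := by
      intro k
      rcases lt_trichotomy (y k) ((⌊x k⌋ : ℝ) + 1) with h | h | h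
      · exact h
      · exfalso
        have : y k = ((⌊x k⌋ + 1 : ℤ) : ℝ) := by push_cast; linarith
        exact (hyirr k).ne_int _ this
      · exfalso
        -- then y (k+1) ∈ (0,1), but y(k+1) > ⌊x(k+1)⌋ ≥ 1
        have h1 : y (k+1) < 1 := by
          rw [hstepy]
          rw [inv_lt_one_iff₀]
          right; linarith
        have h2 : (1:ℝ) ≤ (⌊x (k+1)⌋ : ℝ) := by exact_mod_cast hfl1 k
        linarith [hypos (k+1)]
    have hy1 : ∀ k, 1 < y (k+1) := by
      intro k
      have h2 : (1:ℝ) ≤ (⌊x (k+1)⌋ : ℝ) := by exact_mod_cast hfl1 k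
      linarith [hypos (k+1)]
    -- x(k+1) * x(k+2) > 2
    have hxx : ∀ k, 2 < x (k+1) * x (k+2) := by
      intro k
      have h1 : x (k+1) - ⌊x (k+1)⌋ = (x (k+2))⁻¹ := by
        rw [hstepx (k+1), inv_inv]
      have h2 : (1:ℝ) ≤ (⌊x (k+1)⌋ : ℝ) := by exact_mod_cast hfl1 k
      have h3 : 1 < x (k+2) := hx1 (k+1)
      have h4 : x (k+1) = (⌊x (k+1)⌋ : ℝ) + (x (k+2))⁻¹ := by linarith
      have h5 : (0:ℝ) < x (k+2) := by linarith
      have h7 : (x (k+2))⁻¹ * x (k+2) = 1 := inv_mul_cancel₀ (ne_of_gt h5)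
      have h6 : x (k+1) * x (k+2) = (⌊x (k+1)⌋ : ℝ) * x (k+2) + 1 := by
        calc x (k+1) * x (k+2) = ((⌊x (k+1)⌋ : ℝ) + (x (k+2))⁻¹) * x (k+2) := by rw [← h4]
        _ = (⌊x (k+1)⌋ : ℝ) * x (k+2) + (x (k+2))⁻¹ * x (k+2) := by ring
        _ = (⌊x (k+1)⌋ : ℝ) * x (k+2) + 1 := by rw [h7]
      nlinarith
    -- growth by factor 4 every two steps
    have hstep4 : ∀ k, 4 * (x k - y k)^2 ≤ (x (k+2) - y (k+2))^2 := by
      intro k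
      have g1 := hgrow k
      have g2 := hgrow (k+1)
      have e : (x (k+2) - y (k+2))^2
          = (x k - y k)^2 * ((x (k+1) * x (k+2))^2 * (y (k+1))^2 * (y (k+2))^2) := by
        rw [g2, g1]; ring
      rw [e]
      have h1 := hxx k
      have h2 := hy1 k
      have h3 := hy1 (k+1)
      have h4 : (0:ℝ) ≤ (x k - y k)^2 := sq_nonneg _
      have t0 : (0:ℝ) ≤ (x (k+1) * x (k+2))^2 := sq_nonneg _
      have hy2 : (1:ℝ) ≤ (y (k+1))^2 := by nlinarith
      have hy3 : (1:ℝ) ≤ (y (k+1+1))^2 := by nlinarith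
      have q1 : (4:ℝ) ≤ (x (k+1) * x (k+2))^2 := by nlinarith
      have q2 := le_mul_of_one_le_right t0 hy2
      have t1 : (0:ℝ) ≤ (x (k+1) * x (k+2))^2 * (y (k+1))^2 := by positivity
      have q3 := le_mul_of_one_le_right t1 hy3
      have hS : (4:ℝ) ≤ (x (k+1) * x (k+2))^2 * (y (k+1))^2 * (y (k+1+1))^2 := by linarith
      have hfin := mul_nonneg (show (0:ℝ) ≤ (x (k+1) * x (k+2))^2 * (y (k+1))^2 * (y (k+1+1))^2 - 4 by linarith) h4
      rw [show k+1+1 = k+2 from rfl] at hS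
      nlinarith [hS, h4]
    have hd0 : 0 < (x 0 - y 0)^2 := by
      have h : x 0 - y 0 ≠ 0 := sub_ne_zero.2 hne0
      positivity
    have hiter : ∀ m : ℕ, 4^m * (x 0 - y 0)^2 ≤ (x (2*m) - y (2*m))^2 := by
      intro m
      induction m with
      | zero => simp
      | succ m ih =>
        have h := hstep4 (2*m)
        have e : 2*(m+1) = 2*m+2 := by ring
        rw [e]
        calc 4^(m+1) * (x 0 - y 0)^2 = 4 * (4^m * (x 0 - y 0)^2) := by ring
        _ ≤ 4 * (x (2*m) - y (2*m))^2 := by linarith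
        _ ≤ (x (2*m+2) - y (2*m+2))^2 := h
    obtain ⟨n, hn⟩ := pow_unbounded_of_one_lt ((Δ:ℝ) / (x 0 - y 0)^2) (by norm_num : (1:ℝ) < 4)
    have h1 : (Δ:ℝ) < 4^n * (x 0 - y 0)^2 := by
      rw [div_lt_iff₀ hd0] at hn
      linarith
    linarith [hiter n, hdbound (2*n)]
  -- Phase B: from some point on, -1 < y m < 0
  obtain ⟨k0, hk0⟩ := hA
  have hred : ∀ j : ℕ, -1 < y (k0+2+j) ∧ y (k0+2+j) < 0 := by
    have step : ∀ m, y (m+1) < 0 → -1 < y (m+2) ∧ y (m+2) < 0 := by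
      intro m hm
      have h2 : (1:ℝ) ≤ (⌊x (m+1)⌋ : ℝ) := by exact_mod_cast hfl1 m
      have h3 : y (m+1) - (⌊x (m+1)⌋:ℝ) < -1 := by linarith
      have h4 : y (m+2) = (y (m+1) - ⌊x (m+1)⌋)⁻¹ := hstepy (m+1)
      constructor
      · rw [h4]
        have hu : y (m+1) - (⌊x (m+1)⌋:ℝ) ≠ 0 := by linarith
        have hinv : (y (m+1) - (⌊x (m+1)⌋:ℝ)) * (y (m+1) - (⌊x (m+1)⌋:ℝ))⁻¹ = 1 :=
          mul_inv_cancel₀ hu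
        nlinarith [hinv, h3]
      · rw [h4]
        exact inv_lt_zero.2 (by linarith)
    intro j
    induction j with
    | zero => exact step k0 hk0
    | succ j ih =>
      have := step (k0+1+j) (by have := ih; rw [show k0+2+j = k0+1+j+1 by ring] at this; exact this.2)
      rw [show k0+2+(j+1) = k0+1+j+2 by ring]
      exact this
  -- Phase C: pigeonhole on bounded coefficients
  choose a b c ha hd hqx hqy using hquad
  set M := 2*(2*Δ.toNat+1)^2 with hM
  have key : ∀ i j : ℕ, i < j → j ≤ M → (a (k0+2+i), b (k0+2+i),
        decide (0 ≤ 2*(a (k0+2+i):ℝ)*x (k0+2+i) + (b (k0+2+i):ℝ)))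
      = (a (k0+2+j), b (k0+2+j),
        decide (0 ≤ 2*(a (k0+2+j):ℝ)*x (k0+2+j) + (b (k0+2+j):ℝ))) →
      ∃ N p : ℕ, 0 < p ∧ p ≤ M ∧ x (N + p) = x N := by
    intro i j hij hjM hg
    set mi := k0+2+i with hmi
    set mj := k0+2+j with hmj
    obtain ⟨hA1, hB1, hS1⟩ : a mi = a mj ∧ b mi = b mj ∧
        decide (0 ≤ 2*(a mi:ℝ)*x mi + (b mi:ℝ)) = decide (0 ≤ 2*(a mj:ℝ)*x mj + (b mj:ℝ)) := by
      have h1 := congrArg Prod.fst hg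
      have h2 := congrArg (fun z => z.2.1) hg
      have h3 := congrArg (fun z => z.2.2) hg
      exact ⟨h1, h2, h3⟩
    have hC1 : c mi = c mj := by
      have e1 := hd mi
      have e2 := hd mj
      rw [hA1, hB1] at e1
      have : 4*(a mj)*(c mi) = 4*(a mj)*(c mj) := by linarith
      exact mul_left_cancel₀ (by simp [ha mj]) this
    have hu2 : (2*(a mi:ℝ)*x mi + (b mi:ℝ))^2 = (Δ:ℝ) := by
      have h : (2*(a mi:ℝ)*x mi + (b mi:ℝ))^2 = ((b mi^2 - 4*a mi*c mi : ℤ):ℝ) := by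
        push_cast
        linear_combination 4*(a mi:ℝ)*(hqx mi)
      rw [h, hd mi]
    have hv2 : (2*(a mi:ℝ)*x mj + (b mi:ℝ))^2 = (Δ:ℝ) := by
      have h : (2*(a mj:ℝ)*x mj + (b mj:ℝ))^2 = ((b mj^2 - 4*a mj*c mj : ℤ):ℝ) := by
        push_cast
        linear_combination 4*(a mj:ℝ)*(hqx mj)
      rw [hA1, hB1, h, hd mj]
    have hu0 : (2*(a mi:ℝ)*x mi + (b mi:ℝ)) ≠ 0 := by
      intro h
      rw [h] at hu2
      have : (0:ℝ) < (Δ:ℝ) := by exact_mod_cast hΔ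
      simp at hu2
      linarith [hu2]
    have hsign : (0 ≤ 2*(a mi:ℝ)*x mi + (b mi:ℝ)) ↔ (0 ≤ 2*(a mi:ℝ)*x mj + (b mi:ℝ)) := by
      have h := decide_eq_decide.1 hS1
      rw [hA1, hB1] at h ⊢
      exact h
    have huv : (2*(a mi:ℝ)*x mi + (b mi:ℝ)) = (2*(a mi:ℝ)*x mj + (b mi:ℝ)) :=
      sq_eq_sq_sign hu0 (by rw [hu2, hv2]) hsign
    have hxx' : x mi = x mj := by
      have h2a : (2*(a mi:ℝ)) ≠ 0 := by
        simp only [ne_eq, mul_eq_zero]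
        push_neg
        exact ⟨two_ne_zero, Int.cast_ne_zero.2 (ha mi)⟩
      have : 2*(a mi:ℝ) * x mi = 2*(a mi:ℝ) * x mj := by linarith
      exact mul_left_cancel₀ h2a this
    refine ⟨mi, j - i, by omega, by omega, ?_⟩
    rw [show mi + (j - i) = mj by omega]
    exact hxx'.symm
  -- apply pigeonhole
  have hmaps : ∀ j ∈ Finset.range (M+1),
      (a (k0+2+j), b (k0+2+j),
        decide (0 ≤ 2*(a (k0+2+j):ℝ)*x (k0+2+j) + (b (k0+2+j):ℝ)))
      ∈ (Finset.Icc (-Δ) Δ) ×ˢ (Finset.Icc (-Δ) Δ) ×ˢ (Finset.univ : Finset Bool) := by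
    intro j _
    set m := k0+2+j with hm
    have hxm : 1 < x m := by
      rw [show m = (k0+1+j)+1 by omega]
      exact hx1 (k0+1+j)
    have hym := hred j
    have hrf := roots_facts (a m) (b m) (c m) (ha m) (x m) (y m) (hqx m) (hqy m) (hne m)
    have hprod := hrf.2
    -- a*c < 0 in ℤ
    have hacR : ((a m * c m : ℤ):ℝ) < 0 := by
      push_cast
      have : (c m : ℝ) = x m * y m * (a m:ℝ) := hprod.symm
      rw [this]
      have hxy : x m * y m < 0 := mul_neg_of_pos_of_neg (by linarith) hym.2
      have ha2 : (0:ℝ) < (a m:ℝ)^2 := by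
        have : (a m : ℝ) ≠ 0 := Int.cast_ne_zero.2 (ha m)
        positivity
      nlinarith
    have hac : a m * c m < 0 := by exact_mod_cast hacR
    have hdm := hd m
    have hb2 : b m^2 ≤ Δ := by nlinarith
    have hbb : -Δ ≤ b m ∧ b m ≤ Δ := by
      constructor <;> nlinarith [sq_nonneg (b m + 1), sq_nonneg (b m - 1)]
    have hcne : c m ≠ 0 := by
      intro h
      rw [h, mul_zero] at hac
      exact absurd hac (by norm_num)
    have haa : -Δ ≤ a m ∧ a m ≤ Δ := by
      have h4 : 4*(a m * c m) = b m^2 - Δ := by linarith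
      have hb0 : 0 ≤ b m^2 := sq_nonneg _
      rcases lt_trichotomy (a m) 0 with h | h | h
      · have hc : 0 < c m := by
          by_contra hc
          push_neg at hc
          nlinarith [mul_nonneg (show (0:ℤ) ≤ -(a m) by linarith) (show (0:ℤ) ≤ -(c m) by linarith)]
        have hc1 : 1 ≤ c m := by omega
        constructor
        · nlinarith [mul_nonneg (show (0:ℤ) ≤ -(a m) by linarith) (show (0:ℤ) ≤ c m - 1 by linarith)]
        · linarith
      · exact absurd h (ha m)
      · have hc : c m < 0 := by
          by_contra hc
          push_neg at hc
          nlinarith [mul_nonneg (le_of_lt h) hc]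
        have hc1 : c m ≤ -1 := by omega
        constructor
        · linarith
        · nlinarith [mul_nonneg (show (0:ℤ) ≤ a m by linarith) (show (0:ℤ) ≤ -(c m) - 1 by linarith)]
    simp only [Finset.mem_product, Finset.mem_Icc, Finset.mem_univ, and_true]
    exact ⟨⟨haa.1, haa.2⟩, hbb.1, hbb.2⟩
  have hcard : ((Finset.Icc (-Δ) Δ) ×ˢ (Finset.Icc (-Δ) Δ) ×ˢ (Finset.univ : Finset Bool)).card
      < (Finset.range (M+1)).card := by
    rw [Finset.card_product, Finset.card_product, Finset.card_range, Int.card_Icc]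
    have h1 : (Δ + 1 - -Δ).toNat = 2*Δ.toNat + 1 := by omega
    rw [h1]
    simp only [Finset.card_univ, Fintype.card_bool]
    have e : (2*Δ.toNat+1) * ((2*Δ.toNat+1) * 2) = M := by rw [hM]; ring
    rw [e]
    exact Nat.lt_succ_self M
  obtain ⟨i, hi, j, hj, hij, hg⟩ := Finset.exists_ne_map_eq_of_card_lt_of_maps_to hcard hmaps
  rcases hij.lt_or_gt with h | h
  · exact key i j h (by simp [Finset.mem_range] at hj; omega) hg
  · exact key j i h (by simp [Finset.mem_range] at hi; omega) hg.symm


end Auxiliary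

/-- sequences of irrational elements of a real quadratic field whose conjugate
difference is essentially constant (equal to `β` or `(-1)^n β` for a fixed irrational `β`)
and whose trace sequence has bounded denominators have bounded period lengths. -/
theorem stmt_18 (K : IntermediateField ℚ ℝ) (hK : Module.finrank ℚ K = 2)
    (conj : K ≃ₐ[ℚ] K) (hconj : conj ≠ AlgEquiv.refl)
    (A : ℕ → K) (hirr : ∀ n : ℕ, Irrational (A n : ℝ))
    (β : K) (hβ : Irrational (β : ℝ))
    (hdiff : (∀ n : ℕ, A n - conj (A n) = β) ∨ (∀ n : ℕ, A n - conj (A n) = (-1 : K) ^ n * β))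
    (hden : ∃ D : ℕ, 0 < D ∧ ∀ n : ℕ, ∃ m : ℤ, (D : K) * (A n + conj (A n)) = (m : K)) :
    ∃ B : ℕ, ∀ n : ℕ, periodLength (A n : ℝ) ≤ B := by
  classical
  obtain ⟨D, hD, hden⟩ := hden
  -- rational elements of K
  have hratK : ∀ q : ℚ, ((algebraMap ℚ K q : K) : ℝ) = (q : ℝ) := by
    intro q
    have h1 : (algebraMap ℚ ℝ) q = ((algebraMap ℚ K q : K) : ℝ) := by
      rw [IsScalarTower.algebraMap_apply ℚ K ℝ]
      rfl
    rw [← h1, eq_ratCast]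
  have hirratK : ∀ w : K, Irrational (w:ℝ) → Irrational ((conj w : K) : ℝ) := by
    intro w hw ⟨q, hq⟩
    apply hw
    have h1 : conj w = algebraMap ℚ K q := by
      apply Subtype.coe_injective
      show ((conj w : K):ℝ) = ((algebraMap ℚ K q : K):ℝ)
      rw [hratK]; exact hq.symm
    have h2 : w = conj.symm (algebraMap ℚ K q) := by
      rw [← h1]; simp
    rw [AlgEquiv.commutes] at h2
    exact ⟨q, by rw [h2, hratK]⟩
  -- β basics
  have hβ0 : β ≠ 0 := by
    intro h
    rw [h] at hβ
    exact hβ ⟨0, by simp⟩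
  have hβQ : ∀ q : ℚ, β ≠ algebraMap ℚ K q := by
    intro q h
    exact hβ ⟨q, by rw [h, hratK]⟩
  haveI : FiniteDimensional ℚ K := FiniteDimensional.of_finrank_pos (by rw [hK]; norm_num)
  -- 1, β is a basis
  have hli : LinearIndependent ℚ ![(1:K), β] := by
    rw [linearIndependent_fin2]
    constructor
    · simpa using hβ0
    · intro q h
      simp only [Matrix.cons_val_one, Matrix.head_cons, Matrix.cons_val_zero] at h
      by_cases hq : q = 0
      · rw [hq] at h; simp at h
      · apply hβQ q⁻¹
        have : β = q⁻¹ • (1:K) := by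
          rw [← h, smul_smul, inv_mul_cancel₀ hq, one_smul]
        rw [this, Algebra.algebraMap_eq_smul_one]
  have hcard2 : Fintype.card (Fin 2) = Module.finrank ℚ K := by simp [hK]
  let bas : Module.Basis (Fin 2) ℚ K := basisOfLinearIndependentOfCardEqFinrank hli hcard2
  have hbas : ∀ i, bas i = ![(1:K), β] i := fun i => by
    rw [show bas = _ from rfl]
    rw [coe_basisOfLinearIndependentOfCardEqFinrank]
  -- an algebra endo fixing 1 and β is the identity
  have hfix : ∀ (σ : K ≃ₐ[ℚ] K), σ β = β → ∀ w, σ w = w := by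
    intro σ hσ w
    have h1 : ∀ i, σ.toLinearMap (bas i) = LinearMap.id (R := ℚ) (M := K) (bas i) := by
      intro i
      fin_cases i <;> simp [hbas 0, hbas 1] <;>
        first
          | exact map_one σ
          | simpa [hbas 1] using hσ
    have h2 : σ.toLinearMap = (LinearMap.id : K →ₗ[ℚ] K) := bas.ext h1
    exact LinearMap.congr_fun h2 w
  -- quadratic relation for β
  have hdep : ¬ LinearIndependent ℚ ![(1:K), β, β^2] := by
    intro h
    have := h.fintype_card_le_finrank
    rw [hK] at this
    simp at this
  obtain ⟨g, hg, i0, hgi⟩ := Fintype.not_linearIndependent_iff.1 hdep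
  have hsum : g 0 • (1:K) + g 1 • β + g 2 • β^2 = 0 := by
    have h := hg
    rw [Fin.sum_univ_three] at h
    simpa using h
  have hg2 : g 2 ≠ 0 := by
    intro h2
    rw [h2, zero_smul, add_zero] at hsum
    by_cases h1 : g 1 = 0
    · rw [h1, zero_smul, add_zero] at hsum
      have h0 : g 0 = 0 := by
        rcases smul_eq_zero.1 hsum with h | h
        · exact h
        · exact absurd h one_ne_zero
      have hall : ∀ i : Fin ((Nat.succ 0).succ.succ), g i = 0 := by
        intro i
        fin_cases i
        · exact h0
        · exact h1
        · exact h2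
      exact hgi (hall i0)
    · apply hβQ (-(g 0)/(g 1))
      have h' : g 1 • β = (-(g 0)) • (1:K) := by
        rw [neg_smul]
        rw [add_comm] at hsum
        exact eq_neg_of_add_eq_zero_left hsum
      have h'' := congrArg (fun z => (g 1)⁻¹ • z) h'
      simp only [smul_smul, inv_mul_cancel₀ h1, one_smul] at h''
      rw [h'', Algebra.algebraMap_eq_smul_one, div_eq_inv_mul]
  set r : ℚ := -(g 1)/(g 2) with hrdef
  set s : ℚ := -(g 0)/(g 2) with hsdef
  have hmin : β^2 = r • β + s • (1:K) := by
    apply smul_right_injective K hg2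
    show g 2 • β^2 = g 2 • (r • β + s • (1:K))
    have h' : g 2 • β^2 = -(g 0 • (1:K) + g 1 • β) := eq_neg_of_add_eq_zero_right hsum
    rw [h']
    rw [smul_add, smul_smul, smul_smul]
    have e1 : g 2 * r = -(g 1) := by rw [hrdef]; field_simp
    have e2 : g 2 * s = -(g 0) := by rw [hsdef]; field_simp
    rw [e1, e2, neg_smul, neg_smul, neg_add]
    exact add_comm _ _
  -- conj β ≠ β
  have hconjβ : conj β ≠ β := by
    intro h
    exact hconj (AlgEquiv.ext (fun w => (hfix conj h w).trans (by simp)))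
  -- conj of the relation
  have e1 : β^2 = algebraMap ℚ K r * β + algebraMap ℚ K s * 1 := by
    rw [← Algebra.smul_def, ← Algebra.smul_def]; exact hmin
  have e2 : (conj β)^2 = algebraMap ℚ K r * conj β + algebraMap ℚ K s * 1 := by
    have h := congrArg conj e1
    rw [map_pow, map_add, map_mul, map_mul, map_one, AlgEquiv.commutes, AlgEquiv.commutes] at h
    exact h
  have hfac : (β - conj β) * (β + conj β - algebraMap ℚ K r) = 0 := by
    linear_combination e1 - e2
  have htr : β + conj β = algebraMap ℚ K r := by
    rcases mul_eq_zero.1 hfac with h | h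
    · exact absurd (by linear_combination h) hconjβ.symm
    · linear_combination h
  have hσ2β : conj (conj β) = β := by
    have h1 : conj β = algebraMap ℚ K r - β := by rw [← htr]; ring
    rw [h1, map_sub, AlgEquiv.commutes, h1]
    ring
  have hσ2 : ∀ w : K, conj (conj w) = w := by
    intro w
    have := hfix (conj.trans conj) (by rw [AlgEquiv.trans_apply]; exact hσ2β) w
    rwa [AlgEquiv.trans_apply] at this
  -- conj β = -β
  have hβconj : conj β = -β := by
    have h0 : A 0 - conj (A 0) = β := by
      rcases hdiff with h | h
      · exact h 0
      · simpa using h 0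
    have h1 : conj (A 0) - A 0 = conj β := by
      have h := congrArg conj h0
      rwa [map_sub, hσ2] at h
    linear_combination -h1 - h0
  have hr0 : r = 0 := by
    have h1 : algebraMap ℚ K r = 0 := by rw [← htr, hβconj]; ring
    have h2 : algebraMap ℚ K r = algebraMap ℚ K 0 := by rw [h1, map_zero]
    exact (algebraMap ℚ K).injective h2
  have hs : β^2 = algebraMap ℚ K s := by
    rw [hmin, hr0, zero_smul, zero_add, Algebra.algebraMap_eq_smul_one]
  -- s > 0
  have hβR0 : ((β:K):ℝ) ≠ 0 := fun h => hβ0 (Subtype.coe_injective (by simpa using h))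
  have hsR : ((β:K):ℝ)^2 = (s:ℝ) := by
    have h := congrArg (fun w : K => (w : ℝ)) hs
    rw [← hratK s]
    rw [← h]
    push_cast
    ring
  have hspos : 0 < s := by
    have h1 : (0:ℝ) < ((β:K):ℝ)^2 := by positivity
    rw [hsR] at h1
    exact_mod_cast h1
  -- the uniform discriminant
  set Δ : ℤ := 16 * (D:ℤ)^4 * (s.den:ℤ) * s.num with hΔdef
  have hΔpos : 0 < Δ := by
    have h1 : (0:ℤ) < (D:ℤ) := by exact_mod_cast hD
    have h2 : (0:ℤ) < (s.den:ℤ) := by exact_mod_cast s.pos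
    have h3 : 0 < s.num := Rat.num_pos.2 hspos
    rw [hΔdef]
    positivity
  refine ⟨2*(2*Δ.toNat+1)^2, fun n => ?_⟩
  obtain ⟨m, hm⟩ := hden n
  -- the orbit sequence inside K
  set z : ℕ → K := fun k => Nat.rec (A n) (fun _ w => (w - ((⌊(w:ℝ)⌋ : ℤ) : K))⁻¹) k with hz
  have hz0 : z 0 = A n := rfl
  have hzs : ∀ k, z (k+1) = (z k - ((⌊((z k : K):ℝ)⌋ : ℤ) : K))⁻¹ := fun k => rfl
  set x : ℕ → ℝ := fun k => ((z k : K) : ℝ) with hxdef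
  set y : ℕ → ℝ := fun k => ((conj (z k) : K) : ℝ) with hydef
  have hx0 : x 0 = ((A n : K) : ℝ) := rfl
  have hstepx : ∀ k, x (k+1) = (x k - ⌊x k⌋)⁻¹ := by
    intro k
    show (((z k - ((⌊((z k : K):ℝ)⌋ : ℤ) : K))⁻¹ : K) : ℝ) = _
    rw [show (((z k - ((⌊((z k : K):ℝ)⌋ : ℤ) : K))⁻¹ : K) : ℝ)
        = ((((z k : K) - ((⌊((z k : K):ℝ)⌋ : ℤ) : K)) : K) : ℝ)⁻¹ from rfl]
    push_cast
    rfl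
  have hstepy : ∀ k, y (k+1) = (y k - ⌊x k⌋)⁻¹ := by
    intro k
    show ((conj ((z k - ((⌊((z k : K):ℝ)⌋ : ℤ) : K))⁻¹) : K) : ℝ) = _
    rw [map_inv₀, map_sub, map_intCast]
    rw [show (((conj (z k) - ((⌊((z k : K):ℝ)⌋ : ℤ) : K))⁻¹ : K) : ℝ)
        = ((((conj (z k) : K) - ((⌊((z k : K):ℝ)⌋ : ℤ) : K)) : K) : ℝ)⁻¹ from rfl]
    push_cast
    rfl
  have hxirr : ∀ k, Irrational (x k) := by
    intro k
    induction k with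
    | zero => exact hirr n
    | succ k ih =>
      rw [hstepx k]
      exact (ih.sub_intCast _).inv'
  have hyirr : ∀ k, Irrational (y k) := fun k => hirratK (z k) (hxirr k)
  have hAconj : A n - conj (A n) ≠ 0 := by
    rcases hdiff with h | h
    · rw [h n]; exact hβ0
    · rw [h n]
      intro hh
      rcases mul_eq_zero.1 hh with hh | hh
      · exact pow_ne_zero n (by norm_num : (-1:K) ≠ 0) hh
      · exact hβ0 hh
  have hne0 : x 0 ≠ y 0 := by
    intro h
    apply hAconj
    have h2 : (A n : K) = conj (A n) := Subtype.coe_injective h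
    exact sub_eq_zero_of_eq h2
  -- the initial quadratic
  have hT : (D:ℝ)*(x 0 + y 0) = (m:ℝ) := by
    have h := congrArg (fun w : K => (w : ℝ)) hm
    push_cast at h
    exact h
  have hsq : ((A n : K) - conj (A n))^2 = β^2 := by
    rcases hdiff with h | h
    · rw [h n]
    · rw [h n, mul_pow, ← pow_mul, mul_comm n 2, pow_mul]
      norm_num
  have hSval : (x 0 - y 0)^2 = (s:ℝ) := by
    have h := congrArg (fun w : K => (w : ℝ)) (hsq.trans hs)
    rw [hx0, show y 0 = ((conj (A n) : K) : ℝ) from rfl, ← hratK s, ← h]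
    push_cast
    ring
  have hS : (x 0 - y 0)^2 * (s.den:ℝ) = (s.num:ℝ) := by
    rw [hSval, Rat.cast_def]
    field_simp
  have hq0 : ∃ a b c : ℤ, a ≠ 0 ∧ b^2 - 4*a*c = Δ ∧
      (a:ℝ)*(x 0)^2 + (b:ℝ)*(x 0) + (c:ℝ) = 0 ∧ (a:ℝ)*(y 0)^2 + (b:ℝ)*(y 0) + (c:ℝ) = 0 := by
    refine ⟨4*(D:ℤ)^2*(s.den:ℤ), -(4*(D:ℤ)*(s.den:ℤ))*m, (s.den:ℤ)*m^2 - s.num*(D:ℤ)^2,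
      ?_, by rw [hΔdef]; ring, ?_, ?_⟩
    · have h1 : (0:ℤ) < (D:ℤ) := by exact_mod_cast hD
      have h2 : (0:ℤ) < (s.den:ℤ) := by exact_mod_cast s.pos
      positivity
    · push_cast
      linear_combination (D:ℝ)^2 * hS + (s.den:ℝ)*(3*(D:ℝ)*(x 0) - (D:ℝ)*(y 0) - m) * hT
    · push_cast
      linear_combination (D:ℝ)^2 * hS + (s.den:ℝ)*(3*(D:ℝ)*(y 0) - (D:ℝ)*(x 0) - m) * hT
  obtain ⟨N, p, hp0, hpM, hxeq⟩ := core Δ hΔpos x y hxirr hyirr hne0 hstepx hstepy hq0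
  -- translate to cfMap iterates
  have hiter : ∀ k, cfMap^[k] (x 0) = x k := by
    intro k
    induction k with
    | zero => rfl
    | succ k ih =>
      rw [Function.iterate_succ_apply', ih]
      have hfr0 : Int.fract (x k) ≠ 0 := by
        intro h
        apply (hxirr k).ne_int ⌊x k⌋
        have h2 := Int.self_sub_floor (x k)
        rw [h] at h2
        linarith
      rw [cfMap, if_neg hfr0, hstepx k, Int.self_sub_floor]
  have hshift : ∀ j, x (N + p + j) = x (N + j) := by
    intro j
    induction j with
    | zero => exact hxeq
    | succ j ih =>
      rw [show N + p + (j+1) = (N + p + j) + 1 by ring, show N + (j+1) = (N + j) + 1 by ring,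
        hstepx, hstepx, ih]
  have hper : ∀ k, k ≥ N → cfa (x 0) (k + p) = cfa (x 0) k := by
    intro k hk
    show ⌊cfMap^[k+p] (x 0)⌋ = ⌊cfMap^[k] (x 0)⌋
    rw [hiter, hiter]
    have h := hshift (k - N)
    rw [show N + p + (k - N) = k + p by omega, show N + (k - N) = k by omega] at h
    rw [h]
  have hfin : periodLength (x 0) ≤ p := by
    rw [periodLength, if_pos (show Irrational (x 0) from hxirr 0)]
    exact Nat.sInf_le ⟨hp0, N, hper⟩
  calc periodLength ((A n : K) : ℝ) = periodLength (x 0) := by rw [hx0]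
  _ ≤ p := hfin
  _ ≤ 2*(2*Δ.toNat+1)^2 := hpM
end
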